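/- arXiv:2408.12755 — 4 statements merged into one kernel-verified Lean document; each statement's English description precedes it below -/
import Mathlib

section
/- Let X be a separable real Banach space. Then the following five conditions are equivalent: (gF-1) for every finite-dimensional subspace E ⊆ X and every ε > 0 there exist δ > 0 and a finite-dimensional subspace F ⊆ X with E ⊆ F such that for all ι, ι′ ∈ Emb_δ(F,X) there exists T ∈ Iso(X) with ‖ι′∘incl − T∘ι∘incl‖ < ε, where incl : E → F is the inclusion; (gF-2) for every finite-dimensional subspace E ⊆ X and every ε > 0 there exist a finite-dimensional normed space F finitely representable in X, φ ∈ Emb_ε(E,F) and δ > 0 such that for every finite-dimensional normed space G finitely representable in X, every ψ ∈ Emb_δ(F,G) and every η > 0 there exists ι ∈ Emb_η(G,X) with ‖Id_E − ι∘ψ∘φ‖ < ε; (gF-3) for every finite-dimensional subspace E ⊆ X and every ε > 0 there exist a finite-dimensional normed space F isometrically embeddable into X, φ ∈ Emb_ε(E,F) and δ > 0 such that for every ψ ∈ Emb_δ(F,X) there exists T ∈ Iso(X) with ‖T∘incl_E − ψ∘φ‖ < ε, where incl_E : E → X is the inclusion; (gF-4) for every finite-dimensional subspace E ⊆ X and every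 ε > 0 there exist a finite-dimensional normed space F isometrically embeddable into X, φ ∈ Emb_ε(E,F) and δ > 0 such that for every finite-dimensional normed space G isometrically embeddable into X and every ψ ∈ Emb_δ(F,G) there exists an isometric embedding ι ∈ Emb(G,X) with ‖Id_E − ι∘ψ∘φ‖ < ε; (gF-5) for every finite-dimensional subspace E ⊆ X and every ε > 0 there exist a finite-dimensional subspace F with E ⊆ F ⊆ X and δ > 0 such that for every finite-dimensional normed space G finitely representable in X, every ψ ∈ Emb_δ(F,G) and every η > 0 there exists ι ∈ Emb_η(G,X) with ‖Id_E − ι∘ψ∘incl‖ < ε, where incl : E → F is the inclusion. -/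
noncomputable section

open Real Metric

/-- A bundled finite-dimensional real normed space. -/
structure FinNormedSpace where
  carrier : Type
  [grp : NormedAddCommGroup carrier]
  [mod : NormedSpace ℝ carrier]
  [fd : FiniteDimensional ℝ carrier]

attribute [instance] FinNormedSpace.grp FinNormedSpace.mod FinNormedSpace.fd

instance : CoeSort FinNormedSpace Type := ⟨FinNormedSpace.carrier⟩

/-- `T ∈ Emb_C(E, F)`. -/
def IsEmbC {E F : Type*} [NormedAddCommGroup E] [NormedSpace ℝ E]
    [NormedAddCommGroup F] [NormedSpace ℝ F] (C : ℝ) (T : E →L[ℝ] F) : Prop :=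
  ∀ x : E, Real.exp (-C) * ‖x‖ ≤ ‖T x‖ ∧ ‖T x‖ ≤ Real.exp C * ‖x‖

/-- `T ∈ Emb(E, F)`, i.e. `T` is a linear isometric embedding. -/
def IsIsomEmb {E F : Type*} [NormedAddCommGroup E] [NormedSpace ℝ E]
    [NormedAddCommGroup F] [NormedSpace ℝ F] (T : E →L[ℝ] F) : Prop :=
  ∀ x : E, ‖T x‖ = ‖x‖

/-- The continuous linear map underlying a surjective linear isometry. -/
def toCLM {X Y : Type*} [NormedAddCommGroup X] [NormedSpace ℝ X]
    [NormedAddCommGroup Y] [NormedSpace ℝ Y] (T : X ≃ₗᵢ[ℝ] Y) : X →L[ℝ] Y :=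
  T.toLinearIsometry.toContinuousLinearMap

/-- `F` is finitely representable in `X`. -/
def FinRep (F : FinNormedSpace) (X : Type*) [NormedAddCommGroup X]
    [NormedSpace ℝ X] : Prop :=
  ∀ ε : ℝ, 0 < ε → ∃ T : F.carrier →L[ℝ] X, IsEmbC ε T

/-- The inclusion of a submodule into a larger one, as a continuous linear map. -/
def inclCLM {X : Type*} [NormedAddCommGroup X] [NormedSpace ℝ X]
    {E F : Submodule ℝ X} (h : E ≤ F) : E →L[ℝ] F :=
  (Submodule.subtypeL E).codRestrict F (fun x => h x.2)

section
variable (X : Type*) [NormedAddCommGroup X] [NormedSpace ℝ X]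

/-- Condition (gF-1). -/
def GF1 : Prop :=
  ∀ (E : Submodule ℝ X), FiniteDimensional ℝ E → ∀ ε : ℝ, 0 < ε →
    ∃ δ : ℝ, 0 < δ ∧ ∃ (F : Submodule ℝ X) (hEF : E ≤ F), FiniteDimensional ℝ F ∧
      ∀ ι ι' : F →L[ℝ] X, IsEmbC δ ι → IsEmbC δ ι' →
        ∃ T : X ≃ₗᵢ[ℝ] X,
          ‖ι'.comp (inclCLM hEF) - (toCLM T).comp (ι.comp (inclCLM hEF))‖ < ε

/-- Condition (gF-2). -/
def GF2 : Prop :=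
  ∀ (E : Submodule ℝ X), FiniteDimensional ℝ E → ∀ ε : ℝ, 0 < ε →
    ∃ (F : FinNormedSpace), FinRep F X ∧ ∃ φ : E →L[ℝ] F.carrier, IsEmbC ε φ ∧
      ∃ δ : ℝ, 0 < δ ∧ ∀ (G : FinNormedSpace), FinRep G X →
        ∀ ψ : F.carrier →L[ℝ] G.carrier, IsEmbC δ ψ → ∀ η : ℝ, 0 < η →
          ∃ ι : G.carrier →L[ℝ] X, IsEmbC η ι ∧
            ‖E.subtypeL - ι.comp (ψ.comp φ)‖ < ε

/-- Condition (gF-3). -/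
def GF3 : Prop :=
  ∀ (E : Submodule ℝ X), FiniteDimensional ℝ E → ∀ ε : ℝ, 0 < ε →
    ∃ (F : FinNormedSpace), (∃ j : F.carrier →L[ℝ] X, IsIsomEmb j) ∧
      ∃ φ : E →L[ℝ] F.carrier, IsEmbC ε φ ∧ ∃ δ : ℝ, 0 < δ ∧
        ∀ ψ : F.carrier →L[ℝ] X, IsEmbC δ ψ →
          ∃ T : X ≃ₗᵢ[ℝ] X, ‖(toCLM T).comp E.subtypeL - ψ.comp φ‖ < ε

/-- Condition (gF-4). -/
def GF4 : Prop :=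
  ∀ (E : Submodule ℝ X), FiniteDimensional ℝ E → ∀ ε : ℝ, 0 < ε →
    ∃ (F : FinNormedSpace), (∃ j : F.carrier →L[ℝ] X, IsIsomEmb j) ∧
      ∃ φ : E →L[ℝ] F.carrier, IsEmbC ε φ ∧ ∃ δ : ℝ, 0 < δ ∧
        ∀ (G : FinNormedSpace), (∃ j : G.carrier →L[ℝ] X, IsIsomEmb j) →
          ∀ ψ : F.carrier →L[ℝ] G.carrier, IsEmbC δ ψ →
            ∃ ι : G.carrier →L[ℝ] X, IsIsomEmb ι ∧
              ‖E.subtypeL - ι.comp (ψ.comp φ)‖ < ε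

/-- Condition (gF-5). -/
def GF5 : Prop :=
  ∀ (E : Submodule ℝ X), FiniteDimensional ℝ E → ∀ ε : ℝ, 0 < ε →
    ∃ (F : Submodule ℝ X) (hEF : E ≤ F), FiniteDimensional ℝ F ∧ ∃ δ : ℝ, 0 < δ ∧
      ∀ (G : FinNormedSpace), FinRep G X →
        ∀ ψ : F →L[ℝ] G.carrier, IsEmbC δ ψ → ∀ η : ℝ, 0 < η →
          ∃ ι : G.carrier →L[ℝ] X, IsEmbC η ι ∧
            ‖E.subtypeL - ι.comp (ψ.comp (inclCLM hEF))‖ < ε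

end

set_option maxHeartbeats 1000000
set_option synthInstance.maxHeartbeats 400000

/-! ### Helper lemmas -/

section Helpers

variable {E F G X Y : Type*} [NormedAddCommGroup E] [NormedSpace ℝ E]
  [NormedAddCommGroup F] [NormedSpace ℝ F] [NormedAddCommGroup G] [NormedSpace ℝ G]
  [NormedAddCommGroup X] [NormedSpace ℝ X] [NormedAddCommGroup Y] [NormedSpace ℝ Y]

theorem IsIsomEmb.isEmbC {T : E →L[ℝ] F} (hT : IsIsomEmb T) {C : ℝ} (hC : 0 ≤ C) :
    IsEmbC C T := by
  intro x
  rw [hT x]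
  constructor
  · have h1 : Real.exp (-C) ≤ 1 := Real.exp_le_one_iff.2 (by linarith)
    nlinarith [norm_nonneg x]
  · have h1 : (1:ℝ) ≤ Real.exp C := Real.one_le_exp hC
    nlinarith [norm_nonneg x]

theorem IsEmbC.mono {T : E →L[ℝ] F} {C C' : ℝ} (hT : IsEmbC C T) (h : C ≤ C') :
    IsEmbC C' T := by
  intro x
  obtain ⟨h1, h2⟩ := hT x
  constructor
  · refine le_trans (mul_le_mul_of_nonneg_right ?_ (norm_nonneg x)) h1
    exact Real.exp_le_exp.2 (by linarith)
  · refine h2.trans (mul_le_mul_of_nonneg_right ?_ (norm_nonneg x))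
    exact Real.exp_le_exp.2 h

theorem IsEmbC.comp {S : E →L[ℝ] F} {T : F →L[ℝ] G} {a b : ℝ}
    (hS : IsEmbC a S) (hT : IsEmbC b T) : IsEmbC (a + b) (T.comp S) := by
  intro x
  obtain ⟨hS1, hS2⟩ := hS x
  obtain ⟨hT1, hT2⟩ := hT (S x)
  simp only [ContinuousLinearMap.comp_apply]
  constructor
  · calc Real.exp (-(a+b)) * ‖x‖ = Real.exp (-b) * (Real.exp (-a) * ‖x‖) := by
          rw [← mul_assoc, ← Real.exp_add]; ring_nf
    _ ≤ Real.exp (-b) * ‖S x‖ :=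
        mul_le_mul_of_nonneg_left hS1 (Real.exp_nonneg _)
    _ ≤ ‖T (S x)‖ := hT1
  · calc ‖T (S x)‖ ≤ Real.exp b * ‖S x‖ := hT2
    _ ≤ Real.exp b * (Real.exp a * ‖x‖) :=
        mul_le_mul_of_nonneg_left hS2 (Real.exp_nonneg _)
    _ = Real.exp (a + b) * ‖x‖ := by rw [← mul_assoc, ← Real.exp_add]; ring_nf

theorem IsEmbC.comp_isom_left {S : E →L[ℝ] F} {T : F →L[ℝ] G} {a : ℝ}
    (hS : IsEmbC a S) (hT : IsIsomEmb T) : IsEmbC a (T.comp S) := by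
  intro x
  simp only [ContinuousLinearMap.comp_apply, hT (S x)]
  exact hS x

theorem IsEmbC.isom_comp_right {S : E →L[ℝ] F} {T : F →L[ℝ] G} {a : ℝ}
    (hS : IsIsomEmb S) (hT : IsEmbC a T) : IsEmbC a (T.comp S) := by
  intro x
  simp only [ContinuousLinearMap.comp_apply]
  rw [← hS x]
  exact hT (S x)

theorem IsEmbC.opNorm_le {T : E →L[ℝ] F} {C : ℝ} (hT : IsEmbC C T) :
    ‖T‖ ≤ Real.exp C :=
  ContinuousLinearMap.opNorm_le_bound _ (Real.exp_nonneg _) fun x => (hT x).2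

theorem isIsomEmb_toCLM {T : X ≃ₗᵢ[ℝ] Y} : IsIsomEmb (toCLM T) := fun x => T.norm_map x

theorem isIsomEmb_subtypeL {S : Submodule ℝ X} : IsIsomEmb S.subtypeL := fun x => rfl

theorem isIsomEmb_inclCLM {S T : Submodule ℝ X} (h : S ≤ T) : IsIsomEmb (inclCLM h) :=
  fun x => rfl

theorem IsIsomEmb.comp {S : E →L[ℝ] F} {T : F →L[ℝ] G} (hS : IsIsomEmb S)
    (hT : IsIsomEmb T) : IsIsomEmb (T.comp S) := fun x => by
  simp only [ContinuousLinearMap.comp_apply, hT (S x), hS x]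

/-- Postcomposition with an isometric-valued map preserves operator norms. -/
theorem opNorm_isom_comp {T : F →L[ℝ] G} (hT : IsIsomEmb T) (f : E →L[ℝ] F) :
    ‖T.comp f‖ = ‖f‖ := by
  refine le_antisymm ?_ ?_
  · refine ContinuousLinearMap.opNorm_le_bound _ (norm_nonneg f) fun x => ?_
    simp only [ContinuousLinearMap.comp_apply, hT (f x)]
    exact f.le_opNorm x
  · refine ContinuousLinearMap.opNorm_le_bound _ (norm_nonneg _) fun x => ?_
    rw [← hT (f x)]
    exact (T.comp f).le_opNorm x

theorem opNorm_isomEquiv_comp_sub (T : X ≃ₗᵢ[ℝ] X) (f g : E →L[ℝ] X) :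
    ‖(toCLM T).comp f - (toCLM T).comp g‖ = ‖f - g‖ := by
  rw [← ContinuousLinearMap.comp_sub]
  exact opNorm_isom_comp isIsomEmb_toCLM _

theorem toCLM_symm_comp_toCLM (T : X ≃ₗᵢ[ℝ] X) (f : E →L[ℝ] X) :
    (toCLM T.symm).comp ((toCLM T).comp f) = f := by
  ext x
  simp [toCLM]

theorem clm_norm_sub_rev {E F : Type*} [NormedAddCommGroup E] [NormedSpace ℝ E]
    [NormedAddCommGroup F] [NormedSpace ℝ F] (f g : E →L[ℝ] F) :
    ‖f - g‖ = ‖g - f‖ :=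
  norm_sub_rev (E := E →L[ℝ] F) f g

end Helpers

/-! ### Type-0 copies of finite-dimensional subspaces -/

section Copy

variable {X : Type*} [NormedAddCommGroup X] [NormedSpace ℝ X]

def CopyCarrier (S : Submodule ℝ X) : Type := Fin (Module.finrank ℝ S) → ℝ

variable (S : Submodule ℝ X) [FiniteDimensional ℝ S]

instance : AddCommGroup (CopyCarrier S) := Pi.addCommGroup
instance : Module ℝ (CopyCarrier S) := Pi.module _ _ _

def copyEquivLin : CopyCarrier S ≃ₗ[ℝ] S := (Module.finBasis ℝ S).equivFun.symm

instance : NormedAddCommGroup (CopyCarrier S) :=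
  NormedAddCommGroup.induced (CopyCarrier S) S (copyEquivLin S).toLinearMap
    (copyEquivLin S).injective

instance : NormedSpace ℝ (CopyCarrier S) :=
  NormedSpace.induced ℝ (CopyCarrier S) S (copyEquivLin S).toLinearMap

instance : FiniteDimensional ℝ (CopyCarrier S) :=
  Module.Finite.equiv (copyEquivLin S).symm

def copyEquiv : CopyCarrier S ≃ₗᵢ[ℝ] S :=
  ⟨copyEquivLin S, fun _ => rfl⟩

def copyFNS : FinNormedSpace := ⟨CopyCarrier S⟩

theorem copyFNS_carrier : (copyFNS S).carrier = CopyCarrier S := rfl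

/-- A finite-dimensional subspace's copy is finitely representable (even isometrically
embeddable) in the ambient space. -/
theorem copyFNS_isomEmb :
    ∃ j : (copyFNS S).carrier →L[ℝ] X, IsIsomEmb j := by
  refine ⟨S.subtypeL.comp (toCLM (copyEquiv S)), ?_⟩
  exact IsIsomEmb.comp isIsomEmb_toCLM isIsomEmb_subtypeL

theorem copyFNS_finRep : FinRep (copyFNS S) X := by
  intro ε hε
  obtain ⟨j, hj⟩ := copyFNS_isomEmb S
  exact ⟨j, hj.isEmbC hε.le⟩

end Copy

section Implications

variable {X : Type*} [NormedAddCommGroup X] [NormedSpace ℝ X]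

theorem gf1_imp_gf3 (h1 : GF1 X) : GF3 X := by
  intro E hE ε hε
  obtain ⟨δ, hδ, F, hEF, hFfd, H⟩ := h1 E hE ε hε
  haveI := hFfd
  refine ⟨copyFNS F, copyFNS_isomEmb F,
    (toCLM (copyEquiv F).symm).comp (inclCLM hEF), ?_, δ, hδ, ?_⟩
  · exact (IsIsomEmb.comp (isIsomEmb_inclCLM hEF) isIsomEmb_toCLM).isEmbC hε.le
  · intro ψ hψ
    obtain ⟨T, hT⟩ := H F.subtypeL (ψ.comp (toCLM (copyEquiv F).symm))
      ((isIsomEmb_subtypeL).isEmbC hδ.le)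
      (IsEmbC.isom_comp_right isIsomEmb_toCLM hψ)
    refine ⟨T, ?_⟩
    have e1 : F.subtypeL.comp (inclCLM hEF) = E.subtypeL := by ext x; rfl
    have e2 : (ψ.comp (toCLM (copyEquiv F).symm)).comp (inclCLM hEF)
        = ψ.comp ((toCLM (copyEquiv F).symm).comp (inclCLM hEF)) := by ext x; rfl
    rw [e1, e2] at hT
    rw [clm_norm_sub_rev]
    exact hT

theorem gf3_imp_gf4 (h3 : GF3 X) : GF4 X := by
  intro E hE ε hε
  obtain ⟨F, hFemb, φ, hφ, δ, hδ, H⟩ := h3 E hE ε hε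
  refine ⟨F, hFemb, φ, hφ, δ, hδ, ?_⟩
  rintro G ⟨jG, hjG⟩ ψ hψ
  obtain ⟨T, hT⟩ := H (jG.comp ψ) (IsEmbC.comp_isom_left hψ hjG)
  refine ⟨(toCLM T.symm).comp jG, IsIsomEmb.comp hjG isIsomEmb_toCLM, ?_⟩
  have e1 : ((toCLM T.symm).comp jG).comp (ψ.comp φ)
      = (toCLM T.symm).comp ((jG.comp ψ).comp φ) := by ext x; rfl
  rw [e1]
  calc ‖E.subtypeL - (toCLM T.symm).comp ((jG.comp ψ).comp φ)‖
      = ‖(toCLM T.symm).comp ((toCLM T).comp E.subtypeL)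
          - (toCLM T.symm).comp ((jG.comp ψ).comp φ)‖ := by
        rw [toCLM_symm_comp_toCLM]
    _ = ‖(toCLM T).comp E.subtypeL - (jG.comp ψ).comp φ‖ := by
        rw [← ContinuousLinearMap.comp_sub, opNorm_isom_comp isIsomEmb_toCLM]
    _ < ε := hT

theorem gf4_imp_gf2 (h4 : GF4 X) : GF2 X := by
  intro E hE ε hε
  obtain ⟨F, ⟨jF, hjF⟩, φ, hφ, δ, hδ, H⟩ := h4 E hE ε hε
  refine ⟨F, fun ε' hε' => ⟨jF, hjF.isEmbC hε'.le⟩, φ, hφ, δ/2, by positivity, ?_⟩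
  intro G hGrep ψ hψ η hη
  set θ := min η (δ/2) with hθdef
  have hθ : 0 < θ := lt_min hη (by positivity)
  obtain ⟨j, hj⟩ := hGrep θ hθ
  set S : Submodule ℝ X := LinearMap.range (j : G.carrier →ₗ[ℝ] X) with hSdef
  haveI : FiniteDimensional ℝ S := by
    have : FiniteDimensional ℝ (LinearMap.range (j : G.carrier →ₗ[ℝ] X)) :=
      Module.Finite.range _
    exact this
  have hmem : ∀ x, j x ∈ S := fun x => LinearMap.mem_range_self _ x
  set jcr : G.carrier →L[ℝ] S := j.codRestrict S hmem with hjcr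
  have hjcrC : IsEmbC θ jcr := fun x => hj x
  set jc : G.carrier →L[ℝ] (copyFNS S).carrier :=
    (toCLM (copyEquiv S).symm).comp jcr with hjcdef
  have hjc : IsEmbC θ jc := IsEmbC.comp_isom_left hjcrC isIsomEmb_toCLM
  have hψ₂ : IsEmbC δ (jc.comp ψ) := by
    have := IsEmbC.comp hψ hjc
    refine this.mono ?_
    have : θ ≤ δ/2 := min_le_right _ _
    linarith
  obtain ⟨ι', hι'isom, hb⟩ := H (copyFNS S) (copyFNS_isomEmb S) (jc.comp ψ) hψ₂
  refine ⟨ι'.comp jc, ?_, ?_⟩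
  · exact (IsEmbC.comp_isom_left hjc hι'isom).mono (min_le_left _ _)
  · have e1 : (ι'.comp jc).comp (ψ.comp φ) = ι'.comp ((jc.comp ψ).comp φ) := by
      ext x; rfl
    rw [e1]
    exact hb

theorem gf2_imp_gf5 (h2 : GF2 X) : GF5 X := by
  intro E hE ε hε
  have hden : (0:ℝ) < 2 * (1 + Real.exp 1 * Real.exp 1) := by positivity
  set ε' := ε / (2 * (1 + Real.exp 1 * Real.exp 1)) with hε'def
  have hε' : 0 < ε' := by positivity
  obtain ⟨F, hFrep, φ, hφ, δ, hδ, H⟩ := h2 E hE ε' hε'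
  have hid : IsEmbC δ (ContinuousLinearMap.id ℝ F.carrier) :=
    IsIsomEmb.isEmbC (fun x => rfl) hδ.le
  set η₀ := min (δ/2) 1 with hη₀def
  have hη₀ : 0 < η₀ := lt_min (by positivity) one_pos
  obtain ⟨ι₀, hι₀, hb₀⟩ := H F hFrep (ContinuousLinearMap.id ℝ F.carrier) hid η₀ hη₀
  rw [ContinuousLinearMap.id_comp] at hb₀
  set Fh : Submodule ℝ X := E ⊔ LinearMap.range (ι₀ : F.carrier →ₗ[ℝ] X) with hFhdef
  haveI hfdr : FiniteDimensional ℝ (LinearMap.range (ι₀ : F.carrier →ₗ[ℝ] X)) :=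
    Module.Finite.range _
  haveI : FiniteDimensional ℝ Fh := by
    haveI := hE
    exact Submodule.finiteDimensional_sup _ _
  have hEFh : E ≤ Fh := le_sup_left
  refine ⟨Fh, hEFh, inferInstance, min (δ/2) 1, lt_min (by positivity) one_pos, ?_⟩
  intro G hGrep ψh hψh η₂ hη₂
  set ιt : F.carrier →L[ℝ] Fh := ι₀.codRestrict Fh
    (fun x => Submodule.mem_sup_right (LinearMap.mem_range_self _ x)) with hιtdef
  have hιtC : IsEmbC η₀ ιt := fun x => hι₀ x
  have hψC : IsEmbC δ (ψh.comp ιt) := by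
    refine (IsEmbC.comp hιtC hψh).mono ?_
    have h1 : η₀ ≤ δ/2 := min_le_left _ _
    have h2 : min (δ/2) 1 ≤ δ/2 := min_le_left _ _
    linarith
  set η₃ := min η₂ 1 with hη₃def
  have hη₃ : 0 < η₃ := lt_min hη₂ one_pos
  obtain ⟨ι₂, hι₂, hb₂⟩ := H G hGrep (ψh.comp ιt) hψC η₃ hη₃
  refine ⟨ι₂, hι₂.mono (min_le_left _ _), ?_⟩
  have e3 : Fh.subtypeL.comp (ιt.comp φ - inclCLM hEFh) = ι₀.comp φ - E.subtypeL := by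
    ext x
    simp [hιtdef, inclCLM]
  have key : ‖ιt.comp φ - inclCLM hEFh‖ = ‖ι₀.comp φ - E.subtypeL‖ := by
    rw [← opNorm_isom_comp (isIsomEmb_subtypeL (S := Fh)) (ιt.comp φ - inclCLM hEFh), e3]
  have assoc1 : ι₂.comp ((ψh.comp ιt).comp φ) = (ι₂.comp ψh).comp (ιt.comp φ) := by
    ext x; rfl
  have assoc2 : ι₂.comp (ψh.comp (inclCLM hEFh)) = (ι₂.comp ψh).comp (inclCLM hEFh) := by
    ext x; rfl
  have split : E.subtypeL - ι₂.comp (ψh.comp (inclCLM hEFh))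
      = (E.subtypeL - ι₂.comp ((ψh.comp ιt).comp φ))
        + (ι₂.comp ψh).comp (ιt.comp φ - inclCLM hEFh) := by
    rw [ContinuousLinearMap.comp_sub, assoc1, assoc2]
    abel
  have hnι₂ : ‖ι₂‖ ≤ Real.exp 1 := by
    refine hι₂.opNorm_le.trans (Real.exp_le_exp.2 (min_le_right _ _))
  have hnψh : ‖ψh‖ ≤ Real.exp 1 := by
    refine hψh.opNorm_le.trans (Real.exp_le_exp.2 (min_le_right _ _))
  have hkey2 : ‖ι₀.comp φ - E.subtypeL‖ < ε' := by
    rw [clm_norm_sub_rev]; exact hb₀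
  calc ‖E.subtypeL - ι₂.comp (ψh.comp (inclCLM hEFh))‖
      ≤ ‖E.subtypeL - ι₂.comp ((ψh.comp ιt).comp φ)‖
        + ‖(ι₂.comp ψh).comp (ιt.comp φ - inclCLM hEFh)‖ := by
        rw [split]; exact norm_add_le (E := ↥E →L[ℝ] X) _ _
    _ ≤ ‖E.subtypeL - ι₂.comp ((ψh.comp ιt).comp φ)‖
        + ‖ι₂.comp ψh‖ * ‖ιt.comp φ - inclCLM hEFh‖ := by
        gcongr
        exact ContinuousLinearMap.opNorm_comp_le _ _
    _ ≤ ‖E.subtypeL - ι₂.comp ((ψh.comp ιt).comp φ)‖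
        + (‖ι₂‖ * ‖ψh‖) * ‖ιt.comp φ - inclCLM hEFh‖ := by
        gcongr
        exact ContinuousLinearMap.opNorm_comp_le _ _
    _ < ε' + (Real.exp 1 * Real.exp 1) * ε' := by
        have h1 := ContinuousLinearMap.opNorm_comp_le ι₂ ψh
        have hnn : (0:ℝ) ≤ ‖ιt.comp φ - inclCLM hEFh‖ := ContinuousLinearMap.opNorm_nonneg _
        have hr : ‖ιt.comp φ - inclCLM hEFh‖ < ε' := by rw [key]; exact hkey2
        have hprod : ‖ι₂‖ * ‖ψh‖ ≤ Real.exp 1 * Real.exp 1 :=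
          mul_le_mul hnι₂ hnψh (ContinuousLinearMap.opNorm_nonneg _) (Real.exp_pos 1).le
        have hb₂' := hb₂
        have hq : (‖ι₂‖ * ‖ψh‖) * ‖ιt.comp φ - inclCLM hEFh‖
            ≤ (Real.exp 1 * Real.exp 1) * ε' :=
          mul_le_mul hprod hr.le hnn (by positivity)
        exact add_lt_add_of_lt_of_le hb₂' hq
    _ = ε' * (1 + Real.exp 1 * Real.exp 1) := by ring
    _ = ε / 2 := by
        rw [hε'def]; field_simp
    _ < ε := by linarith

end Implications


/-! ### The back-and-forth machinery: GF5 implies GF1 -/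

section BackForth

variable {X : Type*} [NormedAddCommGroup X] [NormedSpace ℝ X]

/-- A stage of the back-and-forth construction. -/
structure Stage (X : Type*) [NormedAddCommGroup X] [NormedSpace ℝ X] (e : ℝ) where
  Aold : Submodule ℝ X
  A : Submodule ℝ X
  F : Submodule ℝ X
  hAF : A ≤ F
  finAold : FiniteDimensional ℝ Aold
  finF : FiniteDimensional ℝ F
  δ : ℝ
  γ : ℝ
  hδ : 0 < δ
  hγ : 0 < γ
  hγδ : γ ≤ δ
  hγ1 : γ ≤ 1
  w : F →L[ℝ] X
  hw : IsEmbC γ w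
  guard : ∀ (G : FinNormedSpace), FinRep G X →
    ∀ ψ : F →L[ℝ] G.carrier, IsEmbC δ ψ → ∀ η : ℝ, 0 < η →
      ∃ ι : G.carrier →L[ℝ] X, IsEmbC η ι ∧
        ‖A.subtypeL - ι.comp (ψ.comp (inclCLM hAF))‖ < e

/-- The link between two consecutive stages. -/
structure SLink {e e' : ℝ} (xv : X) (s : Stage X e) (s' : Stage X e') : Prop where
  hAold : s'.Aold = s.A
  hchain : s.Aold ≤ s'.A
  hxv : xv ∈ s'.A
  hrange : ∀ y : s.F, s.w y ∈ s'.A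
  hγe : s'.γ ≤ e'
  coh : ∀ a : s.A,
    ‖(a : X) - s'.w ⟨s.w ⟨(a : X), s.hAF a.2⟩, s'.hAF (hrange _)⟩‖ ≤ e * ‖(a : X)‖

theorem step_ex (h5 : GF5 X) {e e' : ℝ} (he' : 0 < e') (xv : X)
    (s : Stage X e) : ∃ s' : Stage X e', SLink xv s s' := by
  classical
  haveI := s.finF
  haveI := s.finAold
  haveI hfinA : FiniteDimensional ℝ s.A := Submodule.finiteDimensional_of_le s.hAF
  set Rw : Submodule ℝ X := LinearMap.range (s.w : s.F →ₗ[ℝ] X) with hRw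
  haveI : FiniteDimensional ℝ Rw := Module.Finite.range _
  set A' : Submodule ℝ X := (s.Aold ⊔ Rw) ⊔ (ℝ ∙ xv) with hA'
  haveI hfinA' : FiniteDimensional ℝ A' := by
    haveI : FiniteDimensional ℝ (s.Aold ⊔ Rw : Submodule ℝ X) :=
      Submodule.finiteDimensional_sup _ _
    exact Submodule.finiteDimensional_sup _ _
  obtain ⟨F', hA'F', finF', δ', hδ', guard'⟩ := h5 A' hfinA' e' he'
  haveI := finF'
  have hmem : ∀ y : s.F, s.w y ∈ F' := fun y =>
    hA'F' (Submodule.mem_sup_left (Submodule.mem_sup_right (LinearMap.mem_range_self _ y)))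
  set ψ : s.F →L[ℝ] (copyFNS F').carrier :=
    (toCLM (copyEquiv F').symm).comp (s.w.codRestrict F' hmem) with hψdef
  have hψ : IsEmbC s.δ ψ := by
    refine IsEmbC.mono ?_ s.hγδ
    exact IsEmbC.comp_isom_left (fun y => s.hw y) isIsomEmb_toCLM
  set η := min δ' (min e' 1) with hηdef
  have hηpos : 0 < η := lt_min hδ' (lt_min he' one_pos)
  obtain ⟨ι, hι, hb⟩ := s.guard (copyFNS F') (copyFNS_finRep F') ψ hψ η hηpos
  set w' : F' →L[ℝ] X := ι.comp (toCLM (copyEquiv F').symm) with hw'def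
  have hw' : IsEmbC η w' := IsEmbC.isom_comp_right isIsomEmb_toCLM hι
  have hrange' : ∀ y : s.F, s.w y ∈ A' :=
    fun y => Submodule.mem_sup_left (Submodule.mem_sup_right (LinearMap.mem_range_self _ y))
  refine ⟨{ Aold := s.A, A := A', F := F', hAF := hA'F', finAold := hfinA,
            finF := finF', δ := δ', γ := η, hδ := hδ', hγ := hηpos,
            hγδ := min_le_left _ _,
            hγ1 := (min_le_right _ _).trans (min_le_right _ _),
            w := w', hw := hw', guard := guard' }, ?_⟩
  refine ⟨rfl, le_trans le_sup_left le_sup_left,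
    Submodule.mem_sup_right (Submodule.mem_span_singleton_self xv),
    hrange', (min_le_right _ _).trans (min_le_left _ _), ?_⟩
  intro a
  have hop : ‖s.A.subtypeL - ι.comp (ψ.comp (inclCLM s.hAF))‖ ≤ e := hb.le
  have hpt := ContinuousLinearMap.le_opNorm
    (s.A.subtypeL - ι.comp (ψ.comp (inclCLM s.hAF))) a
  have hval : (s.A.subtypeL - ι.comp (ψ.comp (inclCLM s.hAF))) a
      = (a : X) - w' ⟨s.w ⟨(a : X), s.hAF a.2⟩, hA'F' (hrange' _)⟩ := rfl
  rw [hval] at hpt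
  calc ‖(a : X) - w' ⟨s.w ⟨(a : X), s.hAF a.2⟩, hA'F' (hrange' _)⟩‖
      ≤ ‖s.A.subtypeL - ι.comp (ψ.comp (inclCLM s.hAF))‖ * ‖a‖ := hpt
    _ ≤ e * ‖(a : X)‖ := mul_le_mul_of_nonneg_right hop (norm_nonneg _)

/-- The back-and-forth chain. -/
noncomputable def bfChain (h5 : GF5 X) (y : ℕ → X) (cs : ℕ → ℝ)
    (hcs : ∀ n, 0 < cs n) (s0 : Stage X (cs 0)) : (n : ℕ) → Stage X (cs n)
  | 0 => s0
  | (n+1) => (step_ex h5 (hcs (n+1)) (y n) (bfChain h5 y cs hcs s0 n)).choose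

theorem bfChain_link (h5 : GF5 X) (y : ℕ → X) (cs : ℕ → ℝ)
    (hcs : ∀ n, 0 < cs n) (s0 : Stage X (cs 0)) (n : ℕ) :
    SLink (y n) (bfChain h5 y cs hcs s0 n) (bfChain h5 y cs hcs s0 (n+1)) :=
  (step_ex h5 (hcs (n+1)) (y n) (bfChain h5 y cs hcs s0 n)).choose_spec

end BackForth


section Homog

open Filter Topology

variable {X : Type*} [NormedAddCommGroup X] [NormedSpace ℝ X]

theorem exp_le_three {u : ℝ} (h : u ≤ 1) : Real.exp u ≤ 3 :=
  (Real.exp_le_exp.2 h).trans (Real.exp_one_lt_d9.le.trans (by norm_num))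

theorem exists_pow_bound (a ρ : ℝ) (hρ : 0 < ρ) (m : ℕ) :
    ∃ k, m ≤ k ∧ a / 2^k < ρ := by
  obtain ⟨N, hN⟩ := pow_unbounded_of_one_lt (a / ρ) (one_lt_two (α := ℝ))
  refine ⟨max N m, le_max_right _ _, ?_⟩
  have h2 : (2:ℝ)^N ≤ 2^(max N m) := by
    apply pow_le_pow_right₀ one_le_two (le_max_left _ _)
  have hp : (0:ℝ) < 2^(max N m) := by positivity
  rw [div_lt_iff₀ hp]
  have h3 : a / ρ < 2^(max N m) := lt_of_lt_of_le hN h2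
  calc a = (a/ρ)*ρ := by field_simp
    _ < 2^(max N m) * ρ := mul_lt_mul_of_pos_right h3 hρ
    _ = ρ * 2^(max N m) := by ring

theorem gf5_homog [CompleteSpace X] [TopologicalSpace.SeparableSpace X]
    (h5 : GF5 X) (E : Submodule ℝ X) (hE : FiniteDimensional ℝ E)
    (ε : ℝ) (hε : 0 < ε) :
    ∃ δ : ℝ, 0 < δ ∧ ∃ (F : Submodule ℝ X) (hEF : E ≤ F), FiniteDimensional ℝ F ∧
      ∀ ι : F →L[ℝ] X, IsEmbC δ ι →
        ∃ T : X ≃ₗᵢ[ℝ] X, ‖ι.comp (inclCLM hEF) - (toCLM T).comp E.subtypeL‖ ≤ ε := by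
  classical
  set cs : ℕ → ℝ := fun n => ε / 2^(n+5) with hcsdef
  have hcs : ∀ n, 0 < cs n := fun n => by
    simp only [hcsdef]; positivity
  set t : ℕ → ℝ := fun N => ε / 2^(N+4) with htdef
  have ht0 : ∀ N, 0 < t N := fun N => by
    simp only [htdef]; positivity
  have htkey : ∀ N, cs N + cs (N+1) = t N - t (N+2) := by
    intro N
    simp only [hcsdef, htdef]
    have h4 : (2:ℝ)^(N+5) = 2^(N+4)*2 := by rw [pow_succ]
    have h6 : (2:ℝ)^(N+1+5) = 2^(N+4)*4 := by
      have : N+1+5 = (N+4)+2 := by omega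
      rw [this, pow_add]; norm_num
    rw [h4, h6]
    have hne : (2:ℝ)^(N+4) ≠ 0 := by positivity
    field_simp
    ring
  -- the dense sequence
  haveI : Nonempty X := ⟨0⟩
  obtain ⟨x, hx⟩ := TopologicalSpace.exists_dense_seq X
  set y : ℕ → X := fun n => x (n / 2) with hydef
  -- initial guard
  obtain ⟨F₀, hEF₀, finF₀, δ₀, hδ₀, guard₀⟩ := h5 E hE (cs 0) (hcs 0)
  refine ⟨min δ₀ 1, lt_min hδ₀ one_pos, F₀, hEF₀, finF₀, ?_⟩
  intro ι hι
  haveI := finF₀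
  set s0 : Stage X (cs 0) :=
    { Aold := E, A := E, F := F₀, hAF := hEF₀, finAold := hE, finF := finF₀,
      δ := δ₀, γ := min δ₀ 1, hδ := hδ₀, hγ := lt_min hδ₀ one_pos,
      hγδ := min_le_left _ _, hγ1 := min_le_right _ _,
      w := ι, hw := hι, guard := guard₀ } with hs0
  set ch := bfChain h5 y cs hcs s0 with hch
  have link : ∀ n, SLink (y n) (ch n) (ch (n+1)) := bfChain_link h5 y cs hcs s0
  set A : ℕ → Submodule ℝ X := fun n => (ch n).A with hAdef
  set Fn : ℕ → Submodule ℝ X := fun n => (ch n).F with hFndef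
  set γn : ℕ → ℝ := fun n => (ch n).γ with hγndef
  set W : ℕ → X → X := fun n a => if h : a ∈ Fn n then (ch n).w ⟨a, h⟩ else 0 with hWdef
  have hA0 : A 0 = E := rfl
  have hAF : ∀ n, A n ≤ Fn n := fun n => (ch n).hAF
  have W1 : ∀ n a (h : a ∈ Fn n), W n a = (ch n).w ⟨a, h⟩ := fun n a h => dif_pos h
  have hγpos : ∀ n, 0 < γn n := fun n => (ch n).hγ
  have hγ1 : ∀ n, γn n ≤ 1 := fun n => (ch n).hγ1
  have hγcs : ∀ n, γn (n+1) ≤ cs (n+1) := fun n => (link n).hγe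
  have W2u : ∀ n a (h : a ∈ Fn n), ‖W n a‖ ≤ Real.exp (γn n) * ‖a‖ := by
    intro n a h
    rw [W1 n a h]
    exact ((ch n).hw ⟨a, h⟩).2
  have W2l : ∀ n a (h : a ∈ Fn n), Real.exp (-γn n) * ‖a‖ ≤ ‖W n a‖ := by
    intro n a h
    rw [W1 n a h]
    exact ((ch n).hw ⟨a, h⟩).1
  have W3 : ∀ n a (h : a ∈ Fn n), ‖W n a‖ ≤ 3 * ‖a‖ := by
    intro n a h
    refine (W2u n a h).trans ?_
    exact mul_le_mul_of_nonneg_right (exp_le_three (hγ1 n)) (norm_nonneg a)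
  have Wsub : ∀ n a b, a ∈ Fn n → b ∈ Fn n → W n (a - b) = W n a - W n b := by
    intro n a b ha hb
    rw [W1 n a ha, W1 n b hb, W1 n (a-b) (sub_mem ha hb)]
    have : (⟨a - b, sub_mem ha hb⟩ : Fn n) = ⟨a, ha⟩ - ⟨b, hb⟩ := rfl
    rw [this, map_sub]
  have Wadd : ∀ n a b, a ∈ Fn n → b ∈ Fn n → W n (a + b) = W n a + W n b := by
    intro n a b ha hb
    rw [W1 n a ha, W1 n b hb, W1 n (a+b) (add_mem ha hb)]
    have : (⟨a + b, add_mem ha hb⟩ : Fn n) = ⟨a, ha⟩ + ⟨b, hb⟩ := rfl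
    rw [this, map_add]
  have Wsmul : ∀ n (r : ℝ) a, a ∈ Fn n → W n (r • a) = r • W n a := by
    intro n r a ha
    rw [W1 n a ha, W1 n (r • a) (Submodule.smul_mem _ r ha)]
    have : (⟨r • a, Submodule.smul_mem _ r ha⟩ : Fn n) = r • ⟨a, ha⟩ := rfl
    rw [this, map_smul]
  have WmemA : ∀ n a (h : a ∈ Fn n), W n a ∈ A (n+1) := by
    intro n a h
    rw [W1 n a h]
    exact (link n).hrange ⟨a, h⟩
  have hAold : ∀ n, (ch (n+1)).Aold = A n := fun n => (link n).hAold
  have step2 : ∀ n, A n ≤ A (n+2) := by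
    intro n
    have h1 := (link (n+1)).hchain
    rwa [hAold n] at h1
  have mono2 : ∀ m k, m ≤ k → A (2*m) ≤ A (2*k) := by
    intro m k hmk
    induction k, hmk using Nat.le_induction with
    | base => exact le_rfl
    | succ k hk ih =>
      have h2 : 2*(k+1) = 2*k+2 := by ring
      rw [h2]
      exact ih.trans (step2 (2*k))
  have mono2' : ∀ m k, m ≤ k → A (2*m+1) ≤ A (2*k+1) := by
    intro m k hmk
    induction k, hmk using Nat.le_induction with
    | base => exact le_rfl
    | succ k hk ih =>
      have h2 : 2*(k+1)+1 = (2*k+1)+2 := by ring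
      rw [h2]
      exact ih.trans (step2 (2*k+1))
  have C1 : ∀ n a (ha : a ∈ A n), ‖a - W (n+1) (W n a)‖ ≤ cs n * ‖a‖ := by
    intro n a ha
    have h1 : a ∈ Fn n := hAF n ha
    have h2 : (ch n).w ⟨a, h1⟩ ∈ Fn (n+1) := by
      have h3 := WmemA n a h1
      rw [W1 n a h1] at h3
      exact hAF (n+1) h3
    have e : W (n+1) (W n a) = (ch (n+1)).w ⟨(ch n).w ⟨a, h1⟩, h2⟩ := by
      rw [W1 n a h1, W1 (n+1) _ h2]
    rw [e]
    exact (link n).coh ⟨a, ha⟩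
  have S1 : ∀ k a, a ∈ A (2*k) →
      ‖W (2*k+2) a - W (2*k) a‖ ≤ 3*(cs (2*k) + cs (2*k+1)) * ‖a‖ := by
    intro k a ha
    have haF : a ∈ Fn (2*k) := hAF _ ha
    have hbA : W (2*k) a ∈ A (2*k+1) := WmemA _ _ haF
    have hbF : W (2*k) a ∈ Fn (2*k+1) := hAF _ hbA
    have huA : W (2*k+1) (W (2*k) a) ∈ A (2*k+2) := WmemA _ _ hbF
    have huF : W (2*k+1) (W (2*k) a) ∈ Fn (2*k+2) := hAF _ huA
    have haA2 : a ∈ A (2*k+2) := step2 _ ha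
    have haF2 : a ∈ Fn (2*k+2) := hAF _ haA2
    have est2 : ‖a - W (2*k+1) (W (2*k) a)‖ ≤ cs (2*k) * ‖a‖ := C1 (2*k) a ha
    have est3 : ‖W (2*k) a - W (2*k+2) (W (2*k+1) (W (2*k) a))‖
        ≤ cs (2*k+1) * ‖W (2*k) a‖ := C1 (2*k+1) _ hbA
    have hbn : ‖W (2*k) a‖ ≤ 3*‖a‖ := W3 _ _ haF
    have e1 : W (2*k+2) a - W (2*k+2) (W (2*k+1) (W (2*k) a))
        = W (2*k+2) (a - W (2*k+1) (W (2*k) a)) := (Wsub _ _ _ haF2 huF).symm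
    have decomp : W (2*k+2) a - W (2*k) a
        = (W (2*k+2) a - W (2*k+2) (W (2*k+1) (W (2*k) a)))
          + (W (2*k+2) (W (2*k+1) (W (2*k) a)) - W (2*k) a) := by abel
    rw [decomp]
    have hn1 : ‖W (2*k+2) a - W (2*k+2) (W (2*k+1) (W (2*k) a))‖
        ≤ 3 * (cs (2*k) * ‖a‖) := by
      rw [e1]
      refine (W3 _ _ (sub_mem haF2 huF)).trans ?_
      exact mul_le_mul_of_nonneg_left est2 (by norm_num)
    have hn2 : ‖W (2*k+2) (W (2*k+1) (W (2*k) a)) - W (2*k) a‖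
        ≤ cs (2*k+1) * (3*‖a‖) := by
      rw [norm_sub_rev]
      exact est3.trans (mul_le_mul_of_nonneg_left hbn (hcs _).le)
    calc ‖(W (2*k+2) a - W (2*k+2) (W (2*k+1) (W (2*k) a)))
          + (W (2*k+2) (W (2*k+1) (W (2*k) a)) - W (2*k) a)‖
        ≤ ‖W (2*k+2) a - W (2*k+2) (W (2*k+1) (W (2*k) a))‖
          + ‖W (2*k+2) (W (2*k+1) (W (2*k) a)) - W (2*k) a‖ := norm_add_le _ _
      _ ≤ 3 * (cs (2*k) * ‖a‖) + cs (2*k+1) * (3*‖a‖) := add_le_add hn1 hn2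
      _ = 3*(cs (2*k) + cs (2*k+1)) * ‖a‖ := by ring
  have S2 : ∀ m k a, m ≤ k → a ∈ A (2*m) →
      ‖W (2*k) a - W (2*m) a‖ ≤ 3 * (t (2*m) - t (2*k)) * ‖a‖ := by
    intro m k a hmk ha
    induction k, hmk using Nat.le_induction with
    | base => simp
    | succ k hk ih =>
      have ha2k : a ∈ A (2*k) := mono2 m k hk ha
      have h1 := S1 k a ha2k
      have h2 : 2*(k+1) = 2*k+2 := by ring
      rw [h2]
      have tri : ‖W (2*k+2) a - W (2*m) a‖
          ≤ ‖W (2*k+2) a - W (2*k) a‖ + ‖W (2*k) a - W (2*m) a‖ := by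
        have := norm_add_le (W (2*k+2) a - W (2*k) a) (W (2*k) a - W (2*m) a)
        rwa [sub_add_sub_cancel] at this
      refine tri.trans ?_
      refine (add_le_add h1 ih).trans (le_of_eq ?_)
      rw [htkey (2*k)]
      ring
  have S3 : ∀ m j k a, m ≤ k → k ≤ j → a ∈ A (2*m) →
      ‖W (2*j) a - W (2*k) a‖ ≤ 3 * t (2*k) * ‖a‖ := by
    intro m j k a hmk hkj ha
    have h1 := S2 k j a hkj (mono2 m k hmk ha)
    refine h1.trans ?_
    have h2 := (ht0 (2*j)).le
    nlinarith [norm_nonneg a]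
  -- tendsto facts
  have hcs2to : Tendsto (fun k => cs (2*k)) atTop (𝓝 0) := by
    have he : ∀ k : ℕ, cs (2*k) = (ε/32) * ((1/4:ℝ))^k := by
      intro k
      simp only [hcsdef]
      have h1 : (2:ℝ)^(2*k+5) = 4^k*32 := by
        rw [pow_add, pow_mul]
        norm_num
      rw [h1, div_pow, one_pow, div_mul_div_comm, mul_one, mul_comm (32:ℝ) ((4:ℝ)^k)]
    have h0 : Tendsto (fun k : ℕ => (ε/32) * (1/4:ℝ)^k) atTop (𝓝 ((ε/32) * 0)) :=
      (tendsto_pow_atTop_nhds_zero_of_lt_one (by norm_num) (by norm_num)).const_mul _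
    rw [mul_zero] at h0
    exact h0.congr (fun k => (he k).symm)
  have hγ2to : Tendsto (fun k => γn (2*k)) atTop (𝓝 0) := by
    refine squeeze_zero' ?_ ?_ hcs2to
    · exact Filter.eventually_atTop.2 ⟨0, fun k _ => (hγpos (2*k)).le⟩
    · refine Filter.eventually_atTop.2 ⟨1, fun k hk => ?_⟩
      have h1 : 2*k = (2*k - 1) + 1 := by omega
      rw [h1]
      exact hγcs _
  -- Cauchy sequences and limits
  have hCauchy : ∀ z : X, (∃ m, z ∈ A (2*m)) → CauchySeq (fun k => W (2*k) z) := by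
    rintro z ⟨m, hm⟩
    rw [Metric.cauchySeq_iff']
    intro ρ hρ
    obtain ⟨k, hk1, hk2⟩ := exists_pow_bound (3*ε*‖z‖) ρ hρ m
    refine ⟨k, fun n hn => ?_⟩
    rw [dist_eq_norm]
    refine lt_of_le_of_lt (S3 m n k z hk1 hn hm) ?_
    have h1 : t (2*k) ≤ ε / 2^k := by
      simp only [htdef]
      exact div_le_div_of_nonneg_left hε.le (by positivity) 
        (pow_le_pow_right₀ one_le_two (by omega))
    calc 3 * t (2*k) * ‖z‖ ≤ 3 * (ε/2^k) * ‖z‖ := by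
          have := norm_nonneg z
          nlinarith [ht0 (2*k)]
      _ = 3*ε*‖z‖ / 2^k := by ring
      _ < ρ := hk2
  set D : Submodule ℝ X := ⨆ k, A (2*k) with hDdef
  have hmono : Monotone (fun k => A (2*k)) := fun i j hij => mono2 i j hij
  have hdir : Directed (· ≤ ·) (fun k => A (2*k)) := hmono.directed_le
  have memD : ∀ z : X, z ∈ D ↔ ∃ k, z ∈ A (2*k) := fun z =>
    Submodule.mem_iSup_of_directed _ hdir
  have hlim : ∀ z : D, ∃ l, Tendsto (fun k => W (2*k) (z : X)) atTop (𝓝 l) :=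
    fun z => cauchySeq_tendsto_of_complete (hCauchy _ ((memD _).1 z.2))
  choose L hL using hlim
  have memD2F : ∀ (z : X), z ∈ D → ∃ m, ∀ k, m ≤ k → z ∈ Fn (2*k) := by
    intro z hz
    obtain ⟨m, hm⟩ := (memD z).1 hz
    exact ⟨m, fun k hk => hAF _ (mono2 m k hk hm)⟩
  have Ladd : ∀ z1 z2 : D, L (z1 + z2) = L z1 + L z2 := by
    intro z1 z2
    obtain ⟨m1, hm1⟩ := memD2F _ z1.2
    obtain ⟨m2, hm2⟩ := memD2F _ z2.2
    refine tendsto_nhds_unique (hL (z1+z2)) (((hL z1).add (hL z2)).congr' ?_)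
    refine Filter.eventually_atTop.2 ⟨max m1 m2, fun k hk => ?_⟩
    have h1 : (z1 : X) ∈ Fn (2*k) := hm1 k (le_trans (le_max_left _ _) hk)
    have h2 : (z2 : X) ∈ Fn (2*k) := hm2 k (le_trans (le_max_right _ _) hk)
    have h3 : ((z1+z2 : D) : X) = (z1:X) + (z2:X) := rfl
    rw [h3]
    exact (Wadd (2*k) _ _ h1 h2).symm
  have Lsmul : ∀ (r : ℝ) (z : D), L (r • z) = r • L z := by
    intro r z
    obtain ⟨m, hm⟩ := memD2F _ z.2
    refine tendsto_nhds_unique (hL (r • z)) (((hL z).const_smul r).congr' ?_)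
    refine Filter.eventually_atTop.2 ⟨m, fun k hk => ?_⟩
    have h1 : (z : X) ∈ Fn (2*k) := hm k hk
    have h3 : ((r • z : D) : X) = r • (z:X) := rfl
    rw [h3]
    exact (Wsmul (2*k) r _ h1).symm
  have Lnorm : ∀ z : D, ‖L z‖ = ‖(z:X)‖ := by
    intro z
    obtain ⟨m, hm⟩ := memD2F _ z.2
    have hnt : Tendsto (fun k => ‖W (2*k) (z:X)‖) atTop (𝓝 ‖L z‖) := (hL z).norm
    have hup : Tendsto (fun k => Real.exp (γn (2*k)) * ‖(z:X)‖) atTop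
        (𝓝 (1 * ‖(z:X)‖)) := by
      refine Tendsto.mul_const _ ?_
      have h1 := (Real.continuous_exp.tendsto 0).comp hγ2to
      simpa [Function.comp_def] using h1
    have hlo : Tendsto (fun k => Real.exp (-γn (2*k)) * ‖(z:X)‖) atTop
        (𝓝 (1 * ‖(z:X)‖)) := by
      refine Tendsto.mul_const _ ?_
      have hneg : Tendsto (fun k => -γn (2*k)) atTop (𝓝 (0:ℝ)) := by
        simpa using hγ2to.neg
      have h1 := (Real.continuous_exp.tendsto 0).comp hneg
      simpa [Function.comp_def] using h1
    have h1 : ‖L z‖ ≤ 1 * ‖(z:X)‖ := by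
      refine le_of_tendsto_of_tendsto hnt hup ?_
      refine Filter.eventually_atTop.2 ⟨m, fun k hk => W2u _ _ (hm k hk)⟩
    have h2 : 1 * ‖(z:X)‖ ≤ ‖L z‖ := by
      refine le_of_tendsto_of_tendsto hlo hnt ?_
      refine Filter.eventually_atTop.2 ⟨m, fun k hk => W2l _ _ (hm k hk)⟩
    rw [one_mul] at h1 h2
    exact le_antisymm h1 h2
  set Tlin : D →ₗ[ℝ] X :=
    { toFun := L, map_add' := Ladd, map_smul' := by intro r z; simpa using Lsmul r z }
    with hTlin
  set Tli : D →ₗᵢ[ℝ] X := ⟨Tlin, fun z => Lnorm z⟩ with hTli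
  -- density of D
  have hxInD : ∀ m, x m ∈ D := by
    intro m
    have h1 := (link (2*m+1)).hxv
    have h2 : y (2*m+1) = x m := by
      simp only [hydef]
      congr 1
      omega
    rw [h2] at h1
    refine (memD _).2 ⟨m+1, ?_⟩
    have h3 : 2*(m+1) = 2*m+2 := by ring
    rw [h3]
    exact h1
  have hDdense : Dense (D : Set X) := by
    refine Dense.mono ?_ hx
    rintro _ ⟨m, rfl⟩
    exact hxInD m
  have hdr : DenseRange (D.subtypeL) := by
    have h1 : Set.range (D.subtypeL) = (D : Set X) := Subtype.range_val
    rw [DenseRange, h1]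
    exact hDdense
  have hui : IsUniformInducing (D.subtypeL) := by
    have h1 : Isometry ((↑) : D → X) := isometry_subtype_coe
    exact h1.isUniformInducing
  set h := Tli.toContinuousLinearMap.extend D.subtypeL with hhdef
  have heq : ∀ d : D, h (d : X) = L d := by
    intro d
    exact ContinuousLinearMap.extend_eq _ hdr hui d
  have hnorm : ∀ z : X, ‖h z‖ = ‖z‖ := by
    have hcont1 : Continuous fun z : X => ‖h z‖ := continuous_norm.comp h.continuous
    have hfg : (fun z : X => ‖h z‖) = fun z => ‖z‖ := by
      refine hcont1.ext_on hDdense continuous_norm ?_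
      intro z hz
      have h1 : h z = L ⟨z, hz⟩ := heq ⟨z, hz⟩
      show ‖h z‖ = ‖z‖
      rw [h1, Lnorm]
    intro z
    exact congrFun hfg z
  have hiso : Isometry h := AddMonoidHomClass.isometry_of_norm h hnorm
  have hclosed : IsClosed (Set.range h) := hiso.isClosedEmbedding.isClosed_range
  have happrox : ∀ (q : ℕ) (z : X), z ∈ A (2*q) →
      ‖h z - W (2*q) z‖ ≤ 3 * t (2*q) * ‖z‖ := by
    intro q z hzA
    have hzD : z ∈ D := (memD z).2 ⟨q, hzA⟩
    have h1 : h z = L ⟨z, hzD⟩ := heq ⟨z, hzD⟩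
    rw [h1]
    have h2 : Tendsto (fun j => ‖W (2*j) z - W (2*q) z‖) atTop
        (𝓝 ‖L ⟨z, hzD⟩ - W (2*q) z‖) := ((hL ⟨z, hzD⟩).sub_const _).norm
    refine le_of_tendsto h2 ?_
    refine Filter.eventually_atTop.2 ⟨q, fun j hj => S3 q j q z le_rfl hj hzA⟩
  have hrangeDense : ∀ m, x m ∈ Set.range h := by
    intro m
    have hbodd : ∀ k, m ≤ k → x m ∈ A (2*k+1) := by
      intro k hk
      have h1 := (link (2*m)).hxv
      have h2 : y (2*m) = x m := by
        simp only [hydef]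
        congr 1
        omega
      rw [h2] at h1
      exact mono2' m k hk h1
    have hcl : x m ∈ closure (Set.range h) := by
      rw [Metric.mem_closure_iff]
      intro ρ hρ
      obtain ⟨k, hk1, hk2⟩ := exists_pow_bound (160 * ε * ‖x m‖) ρ hρ m
      have hbA : x m ∈ A (2*k+1) := hbodd k hk1
      have hbF : x m ∈ Fn (2*k+1) := hAF _ hbA
      have hc'A : W (2*k+1) (x m) ∈ A (2*k+2) := WmemA _ _ hbF
      have h22 : 2*(k+1) = 2*k+2 := by ring
      have hc'A' : W (2*k+1) (x m) ∈ A (2*(k+1)) := by rw [h22]; exact hc'A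
      refine ⟨h (W (2*k+1) (x m)), ⟨_, rfl⟩, ?_⟩
      have est1 : ‖h (W (2*k+1) (x m)) - W (2*(k+1)) (W (2*k+1) (x m))‖
          ≤ 3 * t (2*(k+1)) * ‖W (2*k+1) (x m)‖ := happrox (k+1) _ hc'A'
      rw [h22] at est1
      have est2 : ‖x m - W (2*k+2) (W (2*k+1) (x m))‖ ≤ cs (2*k+1) * ‖x m‖ :=
        C1 (2*k+1) (x m) hbA
      have hc'n : ‖W (2*k+1) (x m)‖ ≤ 3 * ‖x m‖ := W3 _ _ hbF
      rw [dist_eq_norm]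
      have decomp : x m - h (W (2*k+1) (x m))
          = (x m - W (2*k+2) (W (2*k+1) (x m)))
            - (h (W (2*k+1) (x m)) - W (2*k+2) (W (2*k+1) (x m))) := by abel
      rw [decomp]
      have tri : ‖(x m - W (2*k+2) (W (2*k+1) (x m)))
            - (h (W (2*k+1) (x m)) - W (2*k+2) (W (2*k+1) (x m)))‖
          ≤ ‖x m - W (2*k+2) (W (2*k+1) (x m))‖
            + ‖h (W (2*k+1) (x m)) - W (2*k+2) (W (2*k+1) (x m))‖ := norm_sub_le _ _
      have sum_le : ‖(x m - W (2*k+2) (W (2*k+1) (x m)))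
            - (h (W (2*k+1) (x m)) - W (2*k+2) (W (2*k+1) (x m)))‖
          ≤ cs (2*k+1) * ‖x m‖ + 3 * t (2*k+2) * ‖W (2*k+1) (x m)‖ :=
        tri.trans (add_le_add est2 est1)
      refine lt_of_le_of_lt sum_le ?_
      · -- cs (2*k+1) * ‖x m‖ + 3 * t (2*k+2) * ‖W (2*k+1) (x m)‖ < ρ
        have hb1 : cs (2*k+1) ≤ ε / 2^k := by
          simp only [hcsdef]
          exact div_le_div_of_nonneg_left hε.le (by positivity)
            (pow_le_pow_right₀ one_le_two (by omega))
        have hb2 : t (2*k+2) ≤ ε / 2^k := by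
          simp only [htdef]
          exact div_le_div_of_nonneg_left hε.le (by positivity)
            (pow_le_pow_right₀ one_le_two (by omega))
        have hbn : (0:ℝ) ≤ ‖x m‖ := norm_nonneg _
        have hp : (0:ℝ) < 2^k := by positivity
        calc cs (2*k+1) * ‖x m‖ + 3 * t (2*k+2) * ‖W (2*k+1) (x m)‖
            ≤ (ε/2^k) * ‖x m‖ + 3 * (ε/2^k) * (3 * ‖x m‖) := by
              have := (ht0 (2*k+2)).le
              have := (hcs (2*k+1)).le
              have h3 : 3 * t (2*k+2) * ‖W (2*k+1) (x m)‖
                  ≤ 3 * (ε/2^k) * (3 * ‖x m‖) := by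
                have hW0 := norm_nonneg (W (2*k+1) (x m))
                nlinarith [ht0 (2*k+2)]
              have h4 : cs (2*k+1) * ‖x m‖ ≤ (ε/2^k) * ‖x m‖ :=
                mul_le_mul_of_nonneg_right hb1 hbn
              linarith
          _ = 10 * ε * ‖x m‖ / 2^k := by ring
          _ ≤ 160 * ε * ‖x m‖ / 2^k := by
              have : (0:ℝ) ≤ ε * ‖x m‖ / 2^k := by positivity
              have h5 : 10 * ε * ‖x m‖ / 2^k = 10 * (ε * ‖x m‖ / 2^k) := by ring
              have h6 : 160 * ε * ‖x m‖ / 2^k = 160 * (ε * ‖x m‖ / 2^k) := by ring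
              rw [h5, h6]
              nlinarith
          _ < ρ := hk2
    rwa [hclosed.closure_eq] at hcl
  have hsurj : Function.Surjective h := by
    intro z
    have hd : Dense (Set.range h) := by
      refine Dense.mono ?_ hx
      rintro _ ⟨m, rfl⟩
      exact hrangeDense m
    have hr : Set.range h = Set.univ := by
      rw [← hclosed.closure_eq]
      exact hd.closure_eq
    have h1 : z ∈ Set.range h := by rw [hr]; trivial
    exact h1
  set Tfinal : X →ₗᵢ[ℝ] X := ⟨h.toLinearMap, hnorm⟩ with hTfinal
  have hsurj' : Function.Surjective Tfinal := hsurj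
  refine ⟨LinearIsometryEquiv.ofSurjective Tfinal hsurj', ?_⟩
  have hTeq : ∀ z : X, (toCLM (LinearIsometryEquiv.ofSurjective Tfinal hsurj')) z = h z :=
    fun z => rfl
  refine ContinuousLinearMap.opNorm_le_bound _ hε.le ?_
  intro ae
  have haE : (ae : X) ∈ A 0 := ae.2
  have haF0 : (ae : X) ∈ Fn 0 := hAF 0 haE
  have hW0 : W 0 (ae : X) = ι ⟨(ae : X), hEF₀ ae.2⟩ := W1 0 _ haF0
  have happ0 : ‖h (ae : X) - W 0 (ae : X)‖ ≤ 3 * t 0 * ‖(ae : X)‖ := happrox 0 _ haE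
  have hval : (ι.comp (inclCLM hEF₀)
      - (toCLM (LinearIsometryEquiv.ofSurjective Tfinal hsurj')).comp E.subtypeL) ae
      = ι ⟨(ae : X), hEF₀ ae.2⟩ - h (ae : X) := by
    rw [ContinuousLinearMap.sub_apply]
    congr 1
  rw [hval]
  calc ‖ι ⟨(ae : X), hEF₀ ae.2⟩ - h (ae : X)‖
      = ‖h (ae : X) - W 0 (ae : X)‖ := by rw [hW0] at happ0 ⊢; rw [norm_sub_rev]
    _ ≤ 3 * t 0 * ‖(ae : X)‖ := happ0
    _ ≤ ε * ‖ae‖ := by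
        have h1 : t 0 = ε / 16 := by
          simp only [htdef]
          norm_num
        have h2 : ‖(ae : X)‖ = ‖ae‖ := rfl
        rw [h1, h2]
        have := norm_nonneg ae
        nlinarith

end Homog


section Final

variable {X : Type*} [NormedAddCommGroup X] [NormedSpace ℝ X]

theorem gf5_imp_gf1 [CompleteSpace X] [TopologicalSpace.SeparableSpace X]
    (h5 : GF5 X) : GF1 X := by
  intro E hE ε hε
  obtain ⟨δ, hδ, F, hEF, finF, H⟩ := gf5_homog h5 E hE (ε/4) (by positivity)
  refine ⟨δ, hδ, F, hEF, finF, ?_⟩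
  intro ι ι' hι hι'
  obtain ⟨T1, h1⟩ := H ι hι
  obtain ⟨T2, h2⟩ := H ι' hι'
  refine ⟨T1.symm.trans T2, ?_⟩
  have e1 : (toCLM (T1.symm.trans T2)).comp (ι.comp (inclCLM hEF))
      = (toCLM T2).comp ((toCLM T1.symm).comp (ι.comp (inclCLM hEF))) := by
    ext z; rfl
  have key : ‖(toCLM T2).comp E.subtypeL
      - (toCLM T2).comp ((toCLM T1.symm).comp (ι.comp (inclCLM hEF)))‖
      = ‖ι.comp (inclCLM hEF) - (toCLM T1).comp E.subtypeL‖ := by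
    rw [opNorm_isomEquiv_comp_sub]
    have e2 : ‖E.subtypeL - (toCLM T1.symm).comp (ι.comp (inclCLM hEF))‖
        = ‖(toCLM T1).comp E.subtypeL
            - (toCLM T1).comp ((toCLM T1.symm).comp (ι.comp (inclCLM hEF)))‖ :=
      (opNorm_isomEquiv_comp_sub T1 _ _).symm
    rw [e2]
    have e3 : (toCLM T1).comp ((toCLM T1.symm).comp (ι.comp (inclCLM hEF)))
        = ι.comp (inclCLM hEF) := by
      ext z
      simp [toCLM]
    rw [e3, clm_norm_sub_rev]
  have tri : ‖ι'.comp (inclCLM hEF)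
      - (toCLM (T1.symm.trans T2)).comp (ι.comp (inclCLM hEF))‖
      ≤ ‖ι'.comp (inclCLM hEF) - (toCLM T2).comp E.subtypeL‖
        + ‖(toCLM T2).comp E.subtypeL
            - (toCLM (T1.symm.trans T2)).comp (ι.comp (inclCLM hEF))‖ := by
    have h3 := norm_add_le (E := ↥E →L[ℝ] X)
      (ι'.comp (inclCLM hEF) - (toCLM T2).comp E.subtypeL)
      ((toCLM T2).comp E.subtypeL
        - (toCLM (T1.symm.trans T2)).comp (ι.comp (inclCLM hEF)))
    rwa [sub_add_sub_cancel] at h3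
  rw [e1, key] at tri
  refine lt_of_le_of_lt tri ?_
  calc ‖ι'.comp (inclCLM hEF) - (toCLM T2).comp E.subtypeL‖
          + ‖ι.comp (inclCLM hEF) - (toCLM T1).comp E.subtypeL‖
      ≤ ε/4 + ε/4 := add_le_add h2 h1
    _ < ε := by linarith

end Final

theorem guardedFraisse_equivalences (X : Type*) [NormedAddCommGroup X]
    [NormedSpace ℝ X] [CompleteSpace X] [TopologicalSpace.SeparableSpace X] :
    List.TFAE [GF1 X, GF2 X, GF3 X, GF4 X, GF5 X] := by
  tfae_have 1 → 3 := gf1_imp_gf3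
  tfae_have 3 → 4 := gf3_imp_gf4
  tfae_have 4 → 2 := gf4_imp_gf2
  tfae_have 2 → 5 := gf2_imp_gf5
  tfae_have 5 → 1 := gf5_imp_gf1
  tfae_finish
end
end

section
/- Every infinite-dimensional ω-categorical separable real Banach space X is relatively universal: for every separable Banach space Y, if Y is finitely representable in X then there exists a linear isometric embedding of Y into X. -/
noncomputable section

open Real Metric

/-- `X` is ω-categorical (ε-net formulation of compactness of
`(B_X)^n ⫽ Iso(X)`). -/
def OmegaCategorical (X : Type*) [NormedAddCommGroup X] [NormedSpace ℝ X] : Prop :=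
  ∀ n : ℕ, ∀ ε : ℝ, 0 < ε →
    ∃ S : Set (Fin n → X), S.Finite ∧ (∀ x ∈ S, ∀ i, ‖x i‖ ≤ 1) ∧
      ∀ y : Fin n → X, (∀ i, ‖y i‖ ≤ 1) →
        ∃ x ∈ S, ∃ T : X ≃ₗᵢ[ℝ] X, ∀ i, ‖y i - T (x i)‖ < ε

lemma stepLemma {X : Type*} [NormedAddCommGroup X] [NormedSpace ℝ X]
    (hcat : OmegaCategorical X) (t : ℕ → ℕ → X) (ht : ∀ k i, ‖t k i‖ ≤ 1)
    (n : ℕ) (A : Set ℕ) (hA : A.Infinite) :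
    ∃ B ⊆ A, B.Infinite ∧ (∀ k ∈ B, n + 1 ≤ k) ∧
      ∀ k ∈ B, ∀ l ∈ B, ∃ W : X ≃ₗᵢ[ℝ] X,
        ∀ i < n + 1, ‖t k i - W (t l i)‖ < (2:ℝ)⁻¹ ^ (n + 1) := by
  classical
  obtain ⟨S, hSfin, -, hSnet⟩ := hcat (n + 1) ((2:ℝ)⁻¹ ^ (n + 2)) (by positivity)
  set B0 : Set ℕ := A \ Set.Iio (n + 1) with hB0
  have hB0inf : B0.Infinite := hA.diff (Set.finite_Iio _)
  have hnet : ∀ k ∈ B0, ∃ x, x ∈ S ∧ ∃ W : X ≃ₗᵢ[ℝ] X,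
      ∀ i : Fin (n + 1), ‖t k i.1 - W (x i)‖ < (2:ℝ)⁻¹ ^ (n + 2) := by
    intro k _
    obtain ⟨x, hx, W, hW⟩ := hSnet (fun i : Fin (n + 1) => t k i.1) (fun i => ht k i.1)
    exact ⟨x, hx, W, hW⟩
  choose! g hgS Wf hWf using hnet
  have hfiber : ∃ x, (B0 ∩ g ⁻¹' {x}).Infinite := by
    by_contra h
    push_neg at h
    have hsub : B0 ⊆ ⋃ x ∈ S, B0 ∩ g ⁻¹' {x} := fun k hk =>
      Set.mem_biUnion (hgS k hk) ⟨hk, rfl⟩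
    exact hB0inf ((hSfin.biUnion fun x _ => h x).subset hsub)
  obtain ⟨x₀, hx₀⟩ := hfiber
  refine ⟨B0 ∩ g ⁻¹' {x₀}, fun k hk => hk.1.1, hx₀, ?_, ?_⟩
  · intro k hk
    have := hk.1.2
    simp only [Set.mem_Iio, not_lt] at this
    exact this
  · intro k hk l hl
    refine ⟨(Wf l).symm.trans (Wf k), ?_⟩
    intro i hi
    have hgk : g k = x₀ := hk.2
    have hgl : g l = x₀ := hl.2
    have h1 := hWf k hk.1 ⟨i, hi⟩
    have h2 := hWf l hl.1 ⟨i, hi⟩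
    rw [hgk] at h1
    rw [hgl] at h2
    have key : ‖t k i - ((Wf l).symm.trans (Wf k)) (t l i)‖ ≤
        ‖t k i - Wf k (x₀ ⟨i, hi⟩)‖ + ‖Wf l (x₀ ⟨i, hi⟩) - t l i‖ := by
      have e1 : ‖Wf k (x₀ ⟨i, hi⟩) - ((Wf l).symm.trans (Wf k)) (t l i)‖
          = ‖Wf l (x₀ ⟨i, hi⟩) - t l i‖ := by
        rw [LinearIsometryEquiv.trans_apply]
        rw [← map_sub (Wf k), (Wf k).norm_map]
        rw [← (Wf l).norm_map, map_sub (Wf l), (Wf l).apply_symm_apply]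
      calc ‖t k i - ((Wf l).symm.trans (Wf k)) (t l i)‖
          ≤ ‖t k i - Wf k (x₀ ⟨i, hi⟩)‖
            + ‖Wf k (x₀ ⟨i, hi⟩) - ((Wf l).symm.trans (Wf k)) (t l i)‖ :=
            norm_sub_le_norm_sub_add_norm_sub _ _ _
        _ = _ := by rw [e1]
    have : ((2:ℝ)⁻¹ ^ (n + 2)) + ((2:ℝ)⁻¹ ^ (n + 2)) = (2:ℝ)⁻¹ ^ (n + 1) := by
      rw [pow_succ]
      ring
    have h1' : ‖t k i - Wf k (x₀ ⟨i, hi⟩)‖ < (2:ℝ)⁻¹ ^ (n + 2) := h1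
    have h2' : ‖Wf l (x₀ ⟨i, hi⟩) - t l i‖ < (2:ℝ)⁻¹ ^ (n + 2) := by
      rw [norm_sub_rev]; exact h2
    linarith [key, h1', h2']

lemma chainLemma {X : Type*} [NormedAddCommGroup X] [NormedSpace ℝ X]
    (hcat : OmegaCategorical X) (t : ℕ → ℕ → X) (ht : ∀ k i, ‖t k i‖ ≤ 1) :
    ∃ κ : ℕ → ℕ, (∀ n, n ≤ κ n) ∧ ∀ n, ∃ W : X ≃ₗᵢ[ℝ] X,
      ∀ i < n, ‖t (κ n) i - W (t (κ (n + 1)) i)‖ < (2:ℝ)⁻¹ ^ n := by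
  classical
  set P : ℕ → Set ℕ → Prop := fun n A => A.Infinite ∧ (∀ k ∈ A, n ≤ k) ∧
    ∀ k ∈ A, ∀ l ∈ A, ∃ W : X ≃ₗᵢ[ℝ] X,
      ∀ i < n, ‖t k i - W (t l i)‖ < (2:ℝ)⁻¹ ^ n with hP
  have base : P 0 Set.univ := by
    refine ⟨Set.infinite_univ, fun k _ => Nat.zero_le k, fun k _ l _ =>
      ⟨LinearIsometryEquiv.refl ℝ X, fun i hi => absurd hi (Nat.not_lt_zero i)⟩⟩
  have step : ∀ n (A : Set ℕ), P n A → ∃ B, B ⊆ A ∧ P (n + 1) B := by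
    intro n A hPA
    obtain ⟨B, hBA, hBinf, hBge, hBpair⟩ := stepLemma hcat t ht n A hPA.1
    exact ⟨B, hBA, hBinf, hBge, hBpair⟩
  have main : ∃ F : ℕ → Set ℕ, (∀ n, F (n + 1) ⊆ F n) ∧ (∀ n, P n (F n)) := by
    have step' : ∀ n (p : {A : Set ℕ // P n A}), {B : Set ℕ // B ⊆ p.1 ∧ P (n + 1) B} :=
      fun n p => ⟨(step n p.1 p.2).choose, (step n p.1 p.2).choose_spec⟩
    let F : ∀ n : ℕ, {A : Set ℕ // P n A} := fun n =>
      Nat.rec (motive := fun n => {A : Set ℕ // P n A}) ⟨Set.univ, base⟩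
        (fun m p => ⟨(step' m p).1, (step' m p).2.2⟩) n
    exact ⟨fun n => (F n).1, fun n => (step' n (F n)).2.1, fun n => (F n).2⟩
  obtain ⟨F, hFsub, hFP⟩ := main
  have hne : ∀ n, (F n).Nonempty := fun n => (hFP n).1.nonempty
  choose κ hκ using hne
  refine ⟨κ, fun n => (hFP n).2.1 _ (hκ n), fun n => ?_⟩
  exact (hFP n).2.2 (κ n) (hκ n) (κ (n + 1)) (hFsub n (hκ (n + 1)))

lemma limitLemma {X : Type*} [NormedAddCommGroup X] [NormedSpace ℝ X] [CompleteSpace X]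
    (hcat : OmegaCategorical X) (t : ℕ → ℕ → X) (ht : ∀ k i, ‖t k i‖ ≤ 1) :
    ∃ (κ : ℕ → ℕ) (V : ℕ → X ≃ₗᵢ[ℝ] X) (w : ℕ → X), (∀ n, n ≤ κ n) ∧
      ∀ i, Filter.Tendsto (fun m => V m (t (κ m) i)) Filter.atTop (nhds (w i)) := by
  classical
  obtain ⟨κ, hκge, hκW⟩ := chainLemma hcat t ht
  choose W hW using hκW
  obtain ⟨V, hV⟩ : ∃ V : ℕ → X ≃ₗᵢ[ℝ] X, ∀ m x, V (m + 1) x = V m (W m x) :=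
    ⟨fun n => Nat.rec (LinearIsometryEquiv.refl ℝ X) (fun m Vm => (W m).trans Vm) n,
      fun m x => rfl⟩
  set c : ℕ → ℕ → X := fun i m => V m (t (κ m) i) with hc
  have hstep : ∀ i m, i < m → dist (c i m) (c i (m + 1)) < (2:ℝ)⁻¹ ^ m := by
    intro i m him
    rw [dist_eq_norm, hc]
    simp only
    rw [hV m, ← map_sub (V m), (V m).norm_map]
    exact hW m i him
  have hcauchy : ∀ i, CauchySeq (fun m => c i (m + (i + 1))) := by
    intro i
    apply cauchySeq_of_le_geometric (r := (2:ℝ)⁻¹) ((2:ℝ)⁻¹ ^ (i + 1)) (by norm_num)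
    intro m
    have h := hstep i (m + (i + 1)) (by omega)
    have : dist (c i (m + (i + 1))) (c i (m + 1 + (i + 1))) < (2:ℝ)⁻¹ ^ (m + (i + 1)) := by
      have e : m + 1 + (i + 1) = m + (i + 1) + 1 := by omega
      rw [e]; exact h
    calc dist (c i (m + (i + 1))) (c i (m + 1 + (i + 1))) ≤ (2:ℝ)⁻¹ ^ (m + (i + 1)) := this.le
      _ = (2:ℝ)⁻¹ ^ (i + 1) * (2:ℝ)⁻¹ ^ m := by rw [← pow_add]; ring_nf
  have hlim : ∀ i, ∃ a, Filter.Tendsto (fun m => c i (m + (i + 1))) Filter.atTop (nhds a) :=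
    fun i => cauchySeq_tendsto_of_complete (hcauchy i)
  choose w hw using hlim
  refine ⟨κ, V, w, hκge, fun i => ?_⟩
  exact (Filter.tendsto_add_atTop_iff_nat (i + 1)).mp (hw i)

/-- Every infinite-dimensional ω-categorical separable Banach space is relatively
universal. -/
theorem omegaCategorical_relativelyUniversal (X : Type*) [NormedAddCommGroup X]
    [NormedSpace ℝ X] [CompleteSpace X] [TopologicalSpace.SeparableSpace X]
    (hinf : ¬ FiniteDimensional ℝ X) (hcat : OmegaCategorical X)
    (Y : Type*) [NormedAddCommGroup Y] [NormedSpace ℝ Y] [CompleteSpace Y]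
    [TopologicalSpace.SeparableSpace Y]
    (hfinrep : ∀ (G : Submodule ℝ Y), FiniteDimensional ℝ G →
      ∀ ε : ℝ, 0 < ε → ∃ T : G →L[ℝ] X, IsEmbC ε T) :
    Nonempty (Y →ₗᵢ[ℝ] X) := by
  classical
  have hY : Nonempty Y := ⟨0⟩
  set d : ℕ → Y := TopologicalSpace.denseSeq Y with hd
  have hdense : DenseRange d := TopologicalSpace.denseRange_denseSeq Y
  set z : ℕ → Y := fun i => (Real.exp 1 * (‖d i‖ + 1))⁻¹ • d i with hzdef
  have hznorm : ∀ i, Real.exp 1 * ‖z i‖ ≤ 1 := by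
    intro i
    have h1 : (0:ℝ) < ‖d i‖ + 1 := by positivity
    have h2 : (0:ℝ) < Real.exp 1 := Real.exp_pos 1
    have he : Real.exp 1 * ‖z i‖ = ‖d i‖ / (‖d i‖ + 1) := by
      rw [hzdef]
      simp only [norm_smul, Real.norm_eq_abs]
      rw [abs_of_pos (by positivity), mul_inv]
      field_simp
    rw [he, div_le_one h1]
    linarith [norm_nonneg (d i)]
  set G : ℕ → Submodule ℝ Y := fun k => Submodule.span ℝ (z '' Set.Iic k) with hG
  have hGfd : ∀ k, FiniteDimensional ℝ (G k) := fun k =>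
    FiniteDimensional.span_of_finite ℝ ((Set.finite_Iic k).image z)
  have hmemG : ∀ {i k : ℕ}, i ≤ k → z i ∈ G k := fun {i k} h =>
    Submodule.subset_span ⟨i, h, rfl⟩
  have hTex : ∀ k : ℕ, ∃ T : G k →L[ℝ] X, IsEmbC ((2:ℝ)⁻¹ ^ k) T :=
    fun k => hfinrep (G k) (hGfd k) _ (by positivity)
  choose T hT using hTex
  set tup : ℕ → ℕ → X := fun k i => if h : i ≤ k then T k ⟨z i, hmemG h⟩ else 0 with htup
  have htup1 : ∀ k i, ‖tup k i‖ ≤ 1 := by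
    intro k i
    rw [htup]
    simp only
    split
    case isTrue h =>
      have hb := (hT k ⟨z i, hmemG h⟩).2
      have hle : Real.exp ((2:ℝ)⁻¹ ^ k) ≤ Real.exp 1 :=
        Real.exp_le_exp.2 (pow_le_one₀ (by norm_num) (by norm_num))
      have hnz : ‖(⟨z i, hmemG h⟩ : G k)‖ = ‖z i‖ := rfl
      calc ‖T k ⟨z i, hmemG h⟩‖ ≤ Real.exp ((2:ℝ)⁻¹ ^ k) * ‖z i‖ := by rw [← hnz]; exact hb
        _ ≤ Real.exp 1 * ‖z i‖ := mul_le_mul_of_nonneg_right hle (norm_nonneg _)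
        _ ≤ 1 := hznorm i
    case isFalse h => simp
  obtain ⟨κ, V, w, hκge, htend⟩ := limitLemma hcat tup htup1
  set Φ : (ℕ →₀ ℝ) →ₗ[ℝ] X := Finsupp.linearCombination ℝ w with hΦ
  set Ψ : (ℕ →₀ ℝ) →ₗ[ℝ] Y := Finsupp.linearCombination ℝ z with hΨ
  have key : ∀ l : ℕ →₀ ℝ, ‖Φ l‖ = ‖Ψ l‖ := by
    intro l
    set n : ℕ := l.support.sup id + 1 with hn
    have hsupp : ∀ i ∈ l.support, i < n := fun i hi =>
      Nat.lt_succ_of_le (Finset.le_sup (f := id) hi)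
    set s : ℕ → X := fun m => ∑ i ∈ l.support, l i • (V m (tup (κ m) i)) with hs
    have h1 : Filter.Tendsto s Filter.atTop (nhds (Φ l)) := by
      have hΦl : Φ l = ∑ i ∈ l.support, l i • w i := by
        rw [hΦ, Finsupp.linearCombination_apply, Finsupp.sum]
      rw [hΦl]
      exact tendsto_finset_sum _ (fun i _ => ((htend i).const_smul (l i)))
    have h2 : ∀ m, n ≤ m → Real.exp (-((2:ℝ)⁻¹ ^ m)) * ‖Ψ l‖ ≤ ‖s m‖ ∧
        ‖s m‖ ≤ Real.exp ((2:ℝ)⁻¹ ^ m) * ‖Ψ l‖ := by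
      intro m hm
      have hik : ∀ i ∈ l.support, i ≤ κ m := fun i hi =>
        le_trans (hsupp i hi).le (le_trans hm (hκge m))
      set u : G (κ m) := ∑ i ∈ l.support.attach,
        l i.1 • (⟨z i.1, hmemG (hik i.1 i.2)⟩ : G (κ m)) with hu
      have hucoe : (u : Y) = Ψ l := by
        rw [hu, hΨ, Finsupp.linearCombination_apply, Finsupp.sum,
          ← Finset.sum_attach l.support (fun i => l i • z i)]
        push_cast
        rfl
      have hsm : s m = V m (T (κ m) u) := by
        rw [hs]
        simp only
        rw [← Finset.sum_attach l.support (fun i => l i • (V m (tup (κ m) i)))]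
        have : ∀ i ∈ l.support.attach, l i.1 • (V m (tup (κ m) i.1)) =
            V m (T (κ m) (l i.1 • (⟨z i.1, hmemG (hik i.1 i.2)⟩ : G (κ m)))) := by
          intro i _
          rw [htup]
          simp only
          rw [dif_pos (hik i.1 i.2), map_smul, map_smul]
        rw [Finset.sum_congr rfl this, hu, map_sum, map_sum]
      have hnorm_u : ‖u‖ = ‖Ψ l‖ := by rw [← hucoe]; rfl
      have hb := hT (κ m) u
      have hVn : ‖s m‖ = ‖T (κ m) u‖ := by rw [hsm, (V m).norm_map]
      have hpowle : ((2:ℝ)⁻¹) ^ (κ m) ≤ ((2:ℝ)⁻¹) ^ m :=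
        pow_le_pow_of_le_one (by norm_num) (by norm_num) (hκge m)
      constructor
      · calc Real.exp (-((2:ℝ)⁻¹ ^ m)) * ‖Ψ l‖
            ≤ Real.exp (-((2:ℝ)⁻¹ ^ (κ m))) * ‖Ψ l‖ :=
              mul_le_mul_of_nonneg_right (Real.exp_le_exp.2 (neg_le_neg hpowle))
                (norm_nonneg _)
          _ = Real.exp (-((2:ℝ)⁻¹ ^ (κ m))) * ‖u‖ := by rw [hnorm_u]
          _ ≤ ‖T (κ m) u‖ := hb.1
          _ = ‖s m‖ := hVn.symm
      · calc ‖s m‖ = ‖T (κ m) u‖ := hVn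
          _ ≤ Real.exp ((2:ℝ)⁻¹ ^ (κ m)) * ‖u‖ := hb.2
          _ = Real.exp ((2:ℝ)⁻¹ ^ (κ m)) * ‖Ψ l‖ := by rw [hnorm_u]
          _ ≤ Real.exp ((2:ℝ)⁻¹ ^ m) * ‖Ψ l‖ :=
              mul_le_mul_of_nonneg_right (Real.exp_le_exp.2 hpowle) (norm_nonneg _)
    have hpow : Filter.Tendsto (fun m : ℕ => ((2:ℝ)⁻¹) ^ m) Filter.atTop (nhds 0) :=
      tendsto_pow_atTop_nhds_zero_of_lt_one (by norm_num) (by norm_num)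
    have hexp : Filter.Tendsto (fun m : ℕ => Real.exp ((2:ℝ)⁻¹ ^ m) * ‖Ψ l‖)
        Filter.atTop (nhds ‖Ψ l‖) := by
      have h := (Real.continuous_exp.tendsto 0).comp hpow
      rw [Real.exp_zero] at h
      simpa [Function.comp] using h.mul_const ‖Ψ l‖
    have hexp' : Filter.Tendsto (fun m : ℕ => Real.exp (-((2:ℝ)⁻¹ ^ m)) * ‖Ψ l‖)
        Filter.atTop (nhds ‖Ψ l‖) := by
      have hpn : Filter.Tendsto (fun m : ℕ => -((2:ℝ)⁻¹ ^ m)) Filter.atTop (nhds 0) := by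
        simpa using hpow.neg
      have h := (Real.continuous_exp.tendsto 0).comp hpn
      rw [Real.exp_zero] at h
      simpa [Function.comp] using h.mul_const ‖Ψ l‖
    have hup : ‖Φ l‖ ≤ ‖Ψ l‖ :=
      le_of_tendsto_of_tendsto h1.norm hexp
        (Filter.eventually_atTop.2 ⟨n, fun m hm => (h2 m hm).2⟩)
    have hdown : ‖Ψ l‖ ≤ ‖Φ l‖ :=
      le_of_tendsto_of_tendsto hexp' h1.norm
        (Filter.eventually_atTop.2 ⟨n, fun m hm => (h2 m hm).1⟩)
    exact le_antisymm hup hdown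
  have hker : LinearMap.ker Ψ ≤ LinearMap.ker Φ := by
    intro l hl
    rw [LinearMap.mem_ker] at hl ⊢
    have hk := key l
    rw [hl, norm_zero] at hk
    exact norm_eq_zero.mp hk
  set M : LinearMap.range Ψ →ₗ[ℝ] X :=
    ((LinearMap.ker Ψ).liftQ Φ hker).comp (LinearMap.quotKerEquivRange Ψ).symm.toLinearMap
    with hM
  have hMapply : ∀ l : ℕ →₀ ℝ, M ⟨Ψ l, LinearMap.mem_range_self Ψ l⟩ = Φ l := by
    intro l
    rw [hM]
    simp only [LinearMap.comp_apply, LinearEquiv.coe_coe]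
    rw [LinearMap.quotKerEquivRange_symm_apply_image, Submodule.mkQ_apply,
      Submodule.liftQ_apply]
  have hMnorm : ∀ v : LinearMap.range Ψ, ‖M v‖ = ‖(v : Y)‖ := by
    rintro ⟨y, l, rfl⟩
    exact (congrArg norm (hMapply l)).trans (key l)
  set Mc : LinearMap.range Ψ →L[ℝ] X := M.mkContinuous 1 (fun v => by
    rw [hMnorm v, one_mul]
    exact (Submodule.norm_coe v).le) with hMc
  set j : LinearMap.range Ψ →L[ℝ] Y := (LinearMap.range Ψ).subtypeL with hj
  have hjiso : Isometry j := isometry_subtype_coe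
  have hjd : DenseRange j := by
    have hrange : Set.range j = (LinearMap.range Ψ : Set Y) := Subtype.range_coe
    rw [DenseRange, hrange]
    have hsub : Set.range d ⊆ (LinearMap.range Ψ : Set Y) := by
      rintro _ ⟨i, rfl⟩
      have hzi : z i ∈ LinearMap.range Ψ :=
        ⟨Finsupp.single i 1, by rw [hΨ, Finsupp.linearCombination_single, one_smul]⟩
      have hdi : d i = (Real.exp 1 * (‖d i‖ + 1)) • z i := by
        rw [hzdef]
        simp only
        rw [smul_smul, mul_inv_cancel₀ (by positivity), one_smul]
      rw [hdi]
      exact Submodule.smul_mem _ _ hzi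
    exact Dense.mono hsub hdense
  set g : Y →L[ℝ] X := Mc.extend j with hg
  have hgj : ∀ v, g (j v) = Mc v := fun v =>
    ContinuousLinearMap.extend_eq (f := Mc) (e := j) hjd hjiso.isUniformInducing v
  have hgnorm : ∀ y : Y, ‖g y‖ = ‖y‖ := by
    have hclosed : IsClosed {y : Y | ‖g y‖ = ‖y‖} := isClosed_eq g.continuous.norm continuous_norm
    have hsub : Set.range j ⊆ {y : Y | ‖g y‖ = ‖y‖} := by
      rintro _ ⟨v, rfl⟩
      have hMcv : Mc v = M v := rfl
      simp only [Set.mem_setOf_eq]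
      rw [hgj v, hMcv, hMnorm v]
      rfl
    intro y
    exact closure_minimal hsub hclosed (hjd y)
  exact ⟨⟨g.toLinearMap, hgnorm⟩⟩
end
end

section
/- Let X be an infinite-dimensional ω-categorical separable real Banach space. Then closedAge(X) has the ω-amalgamation property: for every finite-dimensional normed space E finitely representable in X, every C > 0, every ε > 0, every sequence (Fₙ)ₙ∈ℕ of finite-dimensional normed spaces finitely representable in X and every sequence (fₙ)ₙ∈ℕ with fₙ ∈ Emb_C(E, Fₙ), there exist n ≠ m, a finite-dimensional normed space G finitely representable in X, and isometric embeddings gₙ ∈ Emb(Fₙ, G) and g_m ∈ Emb(F_m, G) such that ‖gₙ∘fₙ − g_m∘f_m‖ < ε. -/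
noncomputable section

open Real Metric

-- Aux 1: operator norm bound via basis
theorem basisBound {E : Type*} [NormedAddCommGroup E] [NormedSpace ℝ E]
    [FiniteDimensional ℝ E] {k : ℕ} (b : Module.Basis (Fin k) ℝ E) :
    ∃ K : ℝ, 0 ≤ K ∧ ∀ {Y : Type*} [NormedAddCommGroup Y] [NormedSpace ℝ Y]
      (A : E →L[ℝ] Y) (c : ℝ), 0 ≤ c → (∀ i, ‖A (b i)‖ ≤ c) → ‖A‖ ≤ K * c := by
  classical
  set coordL : Fin k → (E →L[ℝ] ℝ) :=
    fun i => LinearMap.toContinuousLinearMap (b.coord i) with hcoordL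
  refine ⟨∑ i, ‖coordL i‖, Finset.sum_nonneg fun i _ => norm_nonneg _, ?_⟩
  intro Y _ _ A c hc hA
  refine A.opNorm_le_bound (by positivity) (fun x => ?_)
  have hx : A x = ∑ i, b.repr x i • A (b i) := by
    conv_lhs => rw [← b.sum_repr x]
    rw [map_sum]
    simp [map_smul]
  rw [hx]
  calc ‖∑ i, b.repr x i • A (b i)‖ ≤ ∑ i, ‖b.repr x i • A (b i)‖ :=
        norm_sum_le _ _
    _ ≤ ∑ i, (‖coordL i‖ * ‖x‖) * c := by
        refine Finset.sum_le_sum fun i _ => ?_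
        rw [norm_smul]
        have h1 : ‖b.repr x i‖ ≤ ‖coordL i‖ * ‖x‖ := by
          have := (coordL i).le_opNorm x
          simpa [hcoordL] using this
        have := mul_le_mul h1 (hA i) (norm_nonneg _)
          (by positivity)
        simpa [mul_assoc] using this
    _ = (∑ i, ‖coordL i‖) * c * ‖x‖ := by rw [← Finset.sum_mul, ← Finset.sum_mul]; ring


theorem good_subseq {X : Type*} [NormedAddCommGroup X] [NormedSpace ℝ X]
    (hcat : OmegaCategorical X) {k : ℕ} (x : ℕ → Fin k → X)
    (hx : ∀ p i, ‖x p i‖ ≤ 1) :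
    ∃ φ : ℕ → ℕ, StrictMono φ ∧ ∀ p : ℕ, ∃ U : X ≃ₗᵢ[ℝ] X,
      ∀ i, ‖x (φ p) i - U (x (φ (p+1)) i)‖ < (1/2 : ℝ)^p := by
  classical
  have key : ∀ (A : Set ℕ), A.Infinite → ∀ δ : ℝ, 0 < δ → ∃ B : Set ℕ, B ⊆ A ∧ B.Infinite ∧
      ∀ q ∈ B, ∀ q' ∈ B, ∃ U : X ≃ₗᵢ[ℝ] X, ∀ i, ‖x q i - U (x q' i)‖ < δ := by
    intro A hA δ hδ
    obtain ⟨S, hSfin, -, hSnet⟩ := hcat k (δ/2) (by positivity)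
    choose c hcS T hT using fun q => hSnet (x q) (hx q)
    have hfib : ∃ s ∈ S, {q | q ∈ A ∧ c q = s}.Infinite := by
      by_contra h
      push_neg at h
      have hsub : A ⊆ ⋃ s ∈ S, {q | q ∈ A ∧ c q = s} :=
        fun q hq => Set.mem_biUnion (hcS q) ⟨hq, rfl⟩
      exact hA ((hSfin.biUnion (fun s hs => h s hs)).subset hsub)
    obtain ⟨s, -, hsInf⟩ := hfib
    refine ⟨{q | q ∈ A ∧ c q = s}, fun q hq => hq.1, hsInf, ?_⟩
    rintro q ⟨-, hq⟩ q' ⟨-, hq'⟩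
    refine ⟨(T q').symm.trans (T q), fun i => ?_⟩
    have h1 : ‖x q i - (T q) (c q i)‖ < δ/2 := hT q i
    have h2 : ‖(T q) (c q i) - (T q) ((T q').symm (x q' i))‖ < δ/2 := by
      rw [← map_sub, (T q).norm_map, ← (T q').norm_map, map_sub,
        (T q').apply_symm_apply, norm_sub_rev, hq, ← hq']
      exact hT q' i
    calc ‖x q i - ((T q').symm.trans (T q)) (x q' i)‖
        ≤ ‖x q i - (T q) (c q i)‖ + ‖(T q) (c q i) - (T q) ((T q').symm (x q' i))‖ := by
          rw [LinearIsometryEquiv.trans_apply]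
          exact norm_sub_le_norm_sub_add_norm_sub _ _ _
      _ < δ/2 + δ/2 := by linarith
      _ = δ := by ring
  choose B hB1 hB2 hB3 using key
  let Arec : ℕ → {s : Set ℕ // s.Infinite} := fun n =>
    Nat.rec ⟨Set.univ, Set.infinite_univ⟩
      (fun p pr => ⟨B pr.1 pr.2 ((1/2:ℝ)^p) (by positivity),
        hB2 pr.1 pr.2 ((1/2:ℝ)^p) (by positivity)⟩) n
  have hsub : ∀ p, (Arec (p+1)).1 ⊆ (Arec p).1 := fun p => hB1 _ _ _ _
  have hrel : ∀ p, ∀ q ∈ (Arec (p+1)).1, ∀ q' ∈ (Arec (p+1)).1,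
      ∃ U : X ≃ₗᵢ[ℝ] X, ∀ i, ‖x q i - U (x q' i)‖ < (1/2:ℝ)^p := fun p => hB3 _ _ _ _
  have step : ∀ (p n : ℕ), ∃ m, m ∈ (Arec p).1 ∧ n < m := by
    intro p n
    obtain ⟨m, hm, hm2⟩ := (Arec p).2.exists_gt n
    exact ⟨m, hm, hm2⟩
  choose g hg1 hg2 using step
  let ψ : ℕ → ℕ := fun n => Nat.rec (g 1 0) (fun p prev => g (p+2) prev) n
  have hψmem : ∀ p, ψ p ∈ (Arec (p+1)).1 := by
    intro p
    cases p with
    | zero => exact hg1 1 0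
    | succ p => exact hg1 (p+2) (ψ p)
  have hψmono : StrictMono ψ := strictMono_nat_of_lt_succ (fun p => hg2 (p+2) (ψ p))
  refine ⟨ψ, hψmono, fun p => ?_⟩
  exact hrel p (ψ p) (hψmem p) (ψ (p+1)) (hsub (p+1) (hψmem (p+1)))


theorem exists_isom_emb {X : Type*} [NormedAddCommGroup X] [NormedSpace ℝ X]
    [CompleteSpace X] (hcat : OmegaCategorical X) (F : FinNormedSpace)
    (hF : FinRep F X) : ∃ V : F.carrier →L[ℝ] X, IsIsomEmb V := by
  classical
  set k := Module.finrank ℝ F.carrier with hk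
  set b : Module.Basis (Fin k) ℝ F.carrier := Module.finBasis ℝ F.carrier with hb
  set R : ℝ := Real.exp 1 * (∑ i, ‖b i‖ + 1) with hR
  have hsum : (0:ℝ) ≤ ∑ i, ‖b i‖ := Finset.sum_nonneg fun i _ => norm_nonneg _
  have hRpos : 0 < R := by positivity
  choose T hT using fun p : ℕ => hF ((1/2:ℝ)^p) (by positivity)
  set x : ℕ → Fin k → X := fun p i => R⁻¹ • T p (b i) with hxdef
  have hTb : ∀ p i, ‖T p (b i)‖ ≤ R := by
    intro p i
    have h1 := (hT p (b i)).2
    have h2 : Real.exp ((1/2:ℝ)^p) ≤ Real.exp 1 :=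
      Real.exp_le_exp.mpr (pow_le_one₀ (by norm_num) (by norm_num))
    have h3 : ‖b i‖ ≤ ∑ j, ‖b j‖ + 1 := by
      have : ‖b i‖ ≤ ∑ j, ‖b j‖ :=
        Finset.single_le_sum (f := fun j => ‖b j‖) (fun j _ => norm_nonneg _)
          (Finset.mem_univ i)
      linarith
    calc ‖T p (b i)‖ ≤ Real.exp ((1/2:ℝ)^p) * ‖b i‖ := h1
      _ ≤ Real.exp 1 * (∑ j, ‖b j‖ + 1) := by
          apply mul_le_mul h2 h3 (norm_nonneg _) (Real.exp_pos 1).le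
      _ = R := hR.symm
  have hx : ∀ p i, ‖x p i‖ ≤ 1 := by
    intro p i
    rw [hxdef]
    simp only [norm_smul, norm_inv, Real.norm_eq_abs, abs_of_pos hRpos]
    rw [inv_mul_le_iff₀ hRpos, mul_one]
    exact hTb p i
  obtain ⟨φ, hφmono, hφ⟩ := good_subseq hcat x hx
  choose U hU using hφ
  let V : ℕ → (X ≃ₗᵢ[ℝ] X) := fun n =>
    Nat.rec (LinearIsometryEquiv.refl ℝ X) (fun p Vp => (U p).trans Vp) n
  set w : ℕ → Fin k → X := fun p i => V p (x (φ p) i) with hwdef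
  have hwstep : ∀ p i, ‖w (p+1) i - w p i‖ < (1/2:ℝ)^p := by
    intro p i
    have h0 : w (p+1) i = V p ((U p) (x (φ (p+1)) i)) := rfl
    rw [h0, hwdef]
    simp only
    rw [← map_sub, (V p).norm_map, norm_sub_rev]
    exact hU p i
  have hcauchy : ∀ i, ∃ y : X, Filter.Tendsto (fun p => w p i) Filter.atTop (nhds y) := by
    intro i
    have : CauchySeq (fun p => w p i) := by
      apply cauchySeq_of_le_geometric (r := (1/2:ℝ)) (C := 1) (by norm_num)
      intro p
      rw [dist_eq_norm, norm_sub_rev, one_mul]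
      exact (hwstep p i).le
    exact cauchySeq_tendsto_of_complete this
  choose y hy using hcauchy
  have key : ∀ a : Fin k → ℝ, ‖∑ i, a i • y i‖ = R⁻¹ * ‖∑ i, a i • b i‖ := by
    intro a
    set u : F.carrier := ∑ i, a i • b i with hu
    have htend : Filter.Tendsto (fun p => ‖∑ i, a i • w p i‖) Filter.atTop
        (nhds ‖∑ i, a i • y i‖) :=
      (tendsto_finset_sum _ (fun i _ => (hy i).const_smul (a i))).norm
    have heq : ∀ p, ‖∑ i, a i • w p i‖ = R⁻¹ * ‖T (φ p) u‖ := by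
      intro p
      have h1 : R⁻¹ • (T (φ p)) u = ∑ i, a i • x (φ p) i := by
        rw [hu, map_sum, Finset.smul_sum]
        refine Finset.sum_congr rfl fun i _ => ?_
        rw [hxdef]
        simp only [map_smul]
        rw [smul_comm]
      have h2 : ∑ i, a i • w p i = (V p) (∑ i, a i • x (φ p) i) := by
        rw [map_sum]
        refine Finset.sum_congr rfl fun i _ => ?_
        rw [map_smul, hwdef]
      rw [h2, ← h1, (V p).norm_map, norm_smul, norm_inv, Real.norm_eq_abs,
        abs_of_pos hRpos]
    have hφge : ∀ p : ℕ, (p:ℕ) ≤ φ p := fun p => hφmono.le_apply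
    have hlb : ∀ p, R⁻¹ * (Real.exp (-((1/2:ℝ)^p)) * ‖u‖) ≤ ‖∑ i, a i • w p i‖ := by
      intro p
      rw [heq p]
      apply mul_le_mul_of_nonneg_left _ (inv_nonneg.mpr hRpos.le)
      calc Real.exp (-((1/2:ℝ)^p)) * ‖u‖ ≤ Real.exp (-((1/2:ℝ)^(φ p))) * ‖u‖ := by
            apply mul_le_mul_of_nonneg_right _ (norm_nonneg _)
            apply Real.exp_le_exp.mpr
            apply neg_le_neg
            apply pow_le_pow_of_le_one (by norm_num) (by norm_num) (hφge p)
        _ ≤ ‖T (φ p) u‖ := (hT (φ p) u).1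
    have hub : ∀ p, ‖∑ i, a i • w p i‖ ≤ R⁻¹ * (Real.exp ((1/2:ℝ)^p) * ‖u‖) := by
      intro p
      rw [heq p]
      apply mul_le_mul_of_nonneg_left _ (inv_nonneg.mpr hRpos.le)
      calc ‖T (φ p) u‖ ≤ Real.exp ((1/2:ℝ)^(φ p)) * ‖u‖ := (hT (φ p) u).2
        _ ≤ Real.exp ((1/2:ℝ)^p) * ‖u‖ := by
            apply mul_le_mul_of_nonneg_right _ (norm_nonneg _)
            exact Real.exp_le_exp.mpr
              (pow_le_pow_of_le_one (by norm_num) (by norm_num) (hφge p))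
    have hhalf : Filter.Tendsto (fun p : ℕ => ((1:ℝ)/2)^p) Filter.atTop (nhds 0) := by
      apply tendsto_pow_atTop_nhds_zero_of_lt_one <;> norm_num
    have hlbt : Filter.Tendsto (fun p : ℕ => R⁻¹ * (Real.exp (-((1/2:ℝ)^p)) * ‖u‖))
        Filter.atTop (nhds (R⁻¹ * (Real.exp (-(0:ℝ)) * ‖u‖))) :=
      (((hhalf.neg).rexp).mul_const ‖u‖).const_mul R⁻¹
    have hubt : Filter.Tendsto (fun p : ℕ => R⁻¹ * (Real.exp ((1/2:ℝ)^p) * ‖u‖))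
        Filter.atTop (nhds (R⁻¹ * (Real.exp (0:ℝ) * ‖u‖))) :=
      ((hhalf.rexp).mul_const ‖u‖).const_mul R⁻¹
    have h1 : R⁻¹ * (Real.exp (-(0:ℝ)) * ‖u‖) ≤ ‖∑ i, a i • y i‖ :=
      le_of_tendsto_of_tendsto' hlbt htend hlb
    have h2 : ‖∑ i, a i • y i‖ ≤ R⁻¹ * (Real.exp (0:ℝ) * ‖u‖) :=
      le_of_tendsto_of_tendsto' htend hubt hub
    simp only [neg_zero, Real.exp_zero, one_mul] at h1 h2
    exact le_antisymm h2 h1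
  -- construct the embedding
  set Vmap : F.carrier →ₗ[ℝ] X := Module.Basis.constr b ℝ (fun i => R • y i) with hVmap
  refine ⟨LinearMap.toContinuousLinearMap Vmap, ?_⟩
  intro z
  have hz : Vmap z = R • ∑ i, b.repr z i • y i := by
    conv_lhs => rw [← b.sum_repr z]
    rw [map_sum, Finset.smul_sum]
    refine Finset.sum_congr rfl fun i _ => ?_
    rw [map_smul, hVmap, Module.Basis.constr_basis, smul_comm]
  have : ‖LinearMap.toContinuousLinearMap Vmap z‖ = ‖Vmap z‖ := rfl
  rw [this, hz, norm_smul, Real.norm_eq_abs, abs_of_pos hRpos, key,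
    ← mul_assoc, mul_inv_cancel₀ hRpos.ne', one_mul]
  conv_rhs => rw [← b.sum_repr z]


/-- Type synonym to avoid instance clashes when pulling back a norm. -/
def PCarrier (d : ℕ) : Type := Fin d → ℝ

theorem exists_finNormedSpace_of_submodule {X : Type*} [NormedAddCommGroup X]
    [NormedSpace ℝ X] (P : Submodule ℝ X) [FiniteDimensional ℝ P] :
    ∃ (G : FinNormedSpace) (e : G.carrier ≃ₗ[ℝ] P),
      ∀ g : G.carrier, ‖g‖ = ‖(e g : X)‖ := by
  classical
  set d := Module.finrank ℝ P with hd
  set bP : Module.Basis (Fin d) ℝ P := Module.finBasis ℝ P with hbP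
  letI add : AddCommGroup (PCarrier d) := inferInstanceAs (AddCommGroup (Fin d → ℝ))
  letI modu : Module ℝ (PCarrier d) := inferInstanceAs (Module ℝ (Fin d → ℝ))
  let e0 : PCarrier d ≃ₗ[ℝ] P := bP.equivFun.symm
  let ℓ : PCarrier d →ₗ[ℝ] X := P.subtype ∘ₗ e0.toLinearMap
  have hinj : Function.Injective ℓ := by
    intro a b hab
    apply e0.injective
    exact Subtype.ext hab
  letI grp : NormedAddCommGroup (PCarrier d) := NormedAddCommGroup.induced _ _ ℓ hinj
  letI mod : NormedSpace ℝ (PCarrier d) := NormedSpace.induced ℝ _ _ ℓ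
  letI fd : FiniteDimensional ℝ (PCarrier d) :=
    Module.Finite.equiv (e0.trans (LinearEquiv.refl ℝ P)).symm
  refine ⟨⟨PCarrier d⟩, e0, fun g => rfl⟩


set_option maxHeartbeats 2000000 in
/-- The closed age of an infinite-dimensional ω-categorical separable Banach
space has the ω-amalgamation property. -/
theorem omegaCategorical_omegaAmalgamation (X : Type*) [NormedAddCommGroup X]
    [NormedSpace ℝ X] [CompleteSpace X] [TopologicalSpace.SeparableSpace X]
    (hinf : ¬ FiniteDimensional ℝ X) (hcat : OmegaCategorical X)
    (E : FinNormedSpace) (hE : FinRep E X)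
    (C ε : ℝ) (hC : 0 < C) (hε : 0 < ε)
    (F : ℕ → FinNormedSpace) (hF : ∀ n, FinRep (F n) X)
    (f : ∀ n, E.carrier →L[ℝ] (F n).carrier) (hf : ∀ n, IsEmbC C (f n)) :
    ∃ n m, n ≠ m ∧ ∃ (G : FinNormedSpace), FinRep G X ∧
      ∃ (gn : (F n).carrier →L[ℝ] G.carrier) (gm : (F m).carrier →L[ℝ] G.carrier),
        IsIsomEmb gn ∧ IsIsomEmb gm ∧ ‖gn.comp (f n) - gm.comp (f m)‖ < ε := by
  classical
  set k := Module.finrank ℝ E.carrier with hk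
  set b : Module.Basis (Fin k) ℝ E.carrier := Module.finBasis ℝ E.carrier with hb
  obtain ⟨K, hK0, hKb⟩ := basisBound b
  choose V hV using fun n => exists_isom_emb hcat (F n) (hF n)
  set W : ∀ n : ℕ, E.carrier →L[ℝ] X := fun n => (V n).comp (f n) with hW
  set R : ℝ := Real.exp C * (∑ i, ‖b i‖ + 1) with hR
  have hsum : (0:ℝ) ≤ ∑ i, ‖b i‖ := Finset.sum_nonneg fun i _ => norm_nonneg _
  have hRpos : 0 < R := by positivity
  have hWb : ∀ n i, ‖W n (b i)‖ ≤ R := by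
    intro n i
    have h1 : ‖W n (b i)‖ = ‖f n (b i)‖ := hV n (f n (b i))
    have h2 := (hf n (b i)).2
    have h3 : ‖b i‖ ≤ ∑ j, ‖b j‖ + 1 := by
      have : ‖b i‖ ≤ ∑ j, ‖b j‖ :=
        Finset.single_le_sum (f := fun j => ‖b j‖) (fun j _ => norm_nonneg _)
          (Finset.mem_univ i)
      linarith
    rw [h1, hR]
    calc ‖f n (b i)‖ ≤ Real.exp C * ‖b i‖ := h2
      _ ≤ Real.exp C * (∑ j, ‖b j‖ + 1) :=
          mul_le_mul_of_nonneg_left h3 (Real.exp_pos C).le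
  set ε' : ℝ := ε / (2 * R * (K + 1)) with hε'
  have hε'pos : 0 < ε' := by positivity
  obtain ⟨S, hSfin, -, hSnet⟩ := hcat k ε' hε'pos
  have hball : ∀ n i, ‖R⁻¹ • W n (b i)‖ ≤ 1 := by
    intro n i
    rw [norm_smul, norm_inv, Real.norm_eq_abs, abs_of_pos hRpos,
      inv_mul_le_iff₀ hRpos, mul_one]
    exact hWb n i
  choose c hcS T hT using fun n => hSnet (fun i => R⁻¹ • W n (b i)) (hball n)
  haveI : Finite ↥S := hSfin.to_subtype
  obtain ⟨n, m, hnm, hc⟩ :=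
    Finite.exists_ne_map_eq_of_infinite (fun n : ℕ => (⟨c n, hcS n⟩ : S))
  have hceq : c n = c m := by simpa using hc
  set U : X ≃ₗᵢ[ℝ] X := (T m).symm.trans (T n) with hUdef
  have hclose : ∀ i, ‖W n (b i) - U (W m (b i))‖ ≤ 2 * R * ε' := by
    intro i
    have h1 : ‖R⁻¹ • W n (b i) - (T n) (c n i)‖ < ε' := hT n i
    have h2 : ‖(T n) (c n i) - U (R⁻¹ • W m (b i))‖ < ε' := by
      rw [hUdef, LinearIsometryEquiv.trans_apply, ← map_sub, (T n).norm_map,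
        ← (T m).norm_map, map_sub, (T m).apply_symm_apply, hceq, norm_sub_rev]
      exact hT m i
    have h3 : ‖R⁻¹ • W n (b i) - U (R⁻¹ • W m (b i))‖ < 2 * ε' := by
      calc ‖R⁻¹ • W n (b i) - U (R⁻¹ • W m (b i))‖
          ≤ ‖R⁻¹ • W n (b i) - (T n) (c n i)‖ + ‖(T n) (c n i) - U (R⁻¹ • W m (b i))‖ :=
            norm_sub_le_norm_sub_add_norm_sub _ _ _
        _ < ε' + ε' := add_lt_add h1 h2
        _ = 2 * ε' := by ring
    have h4 : W n (b i) - U (W m (b i)) = R • (R⁻¹ • W n (b i) - U (R⁻¹ • W m (b i))) := by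
      rw [map_smul, smul_sub, smul_inv_smul₀ hRpos.ne', smul_inv_smul₀ hRpos.ne']
    rw [h4, norm_smul, Real.norm_eq_abs, abs_of_pos hRpos]
    calc R * ‖R⁻¹ • W n (b i) - U (R⁻¹ • W m (b i))‖ ≤ R * (2 * ε') :=
          mul_le_mul_of_nonneg_left h3.le hRpos.le
      _ = 2 * R * ε' := by ring
  -- build the amalgam
  set Vm' : (F m).carrier →L[ℝ] X := (toCLM U).comp (V m) with hVm'
  have hVm'isom : IsIsomEmb Vm' := by
    intro z
    rw [hVm']
    calc ‖(toCLM U) ((V m) z)‖ = ‖(V m) z‖ := U.norm_map _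
      _ = ‖z‖ := hV m z
  set P : Submodule ℝ X :=
    LinearMap.range ((V n : (F n).carrier →ₗ[ℝ] X))
      ⊔ LinearMap.range ((Vm' : (F m).carrier →ₗ[ℝ] X)) with hP
  haveI : FiniteDimensional ℝ P := by
    apply Submodule.finiteDimensional_sup
  obtain ⟨G, e, hG⟩ := exists_finNormedSpace_of_submodule P
  have hmemn : ∀ z : (F n).carrier, (V n) z ∈ P :=
    fun z => Submodule.mem_sup_left (LinearMap.mem_range_self _ z)
  have hmemm : ∀ z : (F m).carrier, Vm' z ∈ P :=
    fun z => Submodule.mem_sup_right (LinearMap.mem_range_self _ z)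
  set gn : (F n).carrier →L[ℝ] G.carrier :=
    LinearMap.toContinuousLinearMap
      (e.symm.toLinearMap ∘ₗ ((V n : (F n).carrier →ₗ[ℝ] X).codRestrict P hmemn)) with hgn
  set gm : (F m).carrier →L[ℝ] G.carrier :=
    LinearMap.toContinuousLinearMap
      (e.symm.toLinearMap ∘ₗ ((Vm' : (F m).carrier →ₗ[ℝ] X).codRestrict P hmemm)) with hgm
  have hgnX : ∀ z, (e (gn z) : X) = (V n) z := by
    intro z
    rw [hgn]
    simp [LinearEquiv.apply_symm_apply]
  have hgmX : ∀ z, (e (gm z) : X) = Vm' z := by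
    intro z
    rw [hgm]
    simp [LinearEquiv.apply_symm_apply]
  refine ⟨n, m, hnm, G, ?_, gn, gm, ?_, ?_, ?_⟩
  · -- FinRep G X
    intro δ hδ
    refine ⟨LinearMap.toContinuousLinearMap
      ((P.subtype ∘ₗ e.toLinearMap)), fun z => ?_⟩
    have hz : ‖LinearMap.toContinuousLinearMap (P.subtype ∘ₗ e.toLinearMap) z‖
        = ‖z‖ := (hG z).symm
    rw [hz]
    constructor
    · have : Real.exp (-δ) ≤ 1 := Real.exp_le_one_iff.mpr (by linarith)
      nlinarith [norm_nonneg z]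
    · have : (1:ℝ) ≤ Real.exp δ := Real.one_le_exp_iff.mpr hδ.le
      nlinarith [norm_nonneg z]
  · intro z
    rw [hG, hgnX]
    exact hV n z
  · intro z
    rw [hG, hgmX]
    exact hVm'isom z
  · -- the norm estimate
    have hDb : ∀ i, ‖(gn.comp (f n) - gm.comp (f m)) (b i)‖ ≤ 2 * R * ε' := by
      intro i
      have h1 : (gn.comp (f n) - gm.comp (f m)) (b i)
          = gn (f n (b i)) - gm (f m (b i)) := rfl
      rw [h1, hG, map_sub]
      push_cast
      rw [hgnX, hgmX]
      exact hclose i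
    have hbound := hKb (gn.comp (f n) - gm.comp (f m)) (2 * R * ε') (by positivity) hDb
    have hfin : K * (2 * R * ε') < ε := by
      have h2 : 2 * R * ε' = ε / (K + 1) := by
        rw [hε']
        field_simp
      rw [h2]
      calc K * (ε / (K+1)) = ε * (K/(K+1)) := by ring
        _ < ε * 1 := by
            apply mul_lt_mul_of_pos_left _ hε
            rw [div_lt_one (by positivity)]
            linarith
        _ = ε := mul_one ε
    exact lt_of_le_of_lt hbound hfin
end
end

section
/- Let X be an infinite-dimensional ω-categorical separable real Banach space, E a finite-dimensional subspace of X, and ε > 0. Then there exists δ > 0 with the following property: for every f ∈ Emb_δ(E, X) there exists a linear isometric embedding g ∈ Emb(E, X) with ‖f − g‖ ≤ ε. -/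
noncomputable section

open Real Metric

lemma nested_chain {P : ℕ → Set ℕ → Prop}
    (step : ∀ m (A : Set ℕ), A.Infinite → ∃ B, B ⊆ A ∧ B.Infinite ∧ P m B) :
    ∃ A : ℕ → Set ℕ, (∀ m, (A m).Infinite) ∧ (∀ m, A (m+1) ⊆ A m) ∧ ∀ m, P m (A m) := by
  choose F hsub hinf hP using step
  let A : ℕ → {s : Set ℕ // s.Infinite} := fun m =>
    Nat.rec ⟨F 0 Set.univ Set.infinite_univ, hinf _ _ _⟩
      (fun m p => ⟨F (m+1) p.1 p.2, hinf _ _ _⟩) m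
  refine ⟨fun m => (A m).1, fun m => (A m).2, fun m => ?_, fun m => ?_⟩
  · exact hsub _ _ _
  · cases m with
    | zero => exact hP _ _ _
    | succ m => exact hP _ _ _

lemma exists_strictMono_mem {A : ℕ → Set ℕ} (hinf : ∀ m, (A m).Infinite) :
    ∃ k : ℕ → ℕ, StrictMono k ∧ ∀ m, k m ∈ A m := by
  choose g hg1 hg2 using fun m n => (hinf m).exists_gt n
  let k : ℕ → ℕ := fun m => Nat.rec (g 0 0) (fun m p => g (m+1) p) m
  refine ⟨k, strictMono_nat_of_lt_succ fun m => hg2 _ _, fun m => ?_⟩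
  cases m with
  | zero => exact hg1 _ _
  | succ m => exact hg1 _ _

lemma refine_step {X : Type*} [NormedAddCommGroup X] [NormedSpace ℝ X]
    (hcat : OmegaCategorical X) {d : ℕ} (y : ℕ → Fin d → X)
    (hy : ∀ k i, ‖y k i‖ ≤ 1) (m : ℕ) (A : Set ℕ) (hA : A.Infinite) :
    ∃ B, B ⊆ A ∧ B.Infinite ∧ ∀ k ∈ B, ∀ l ∈ B,
      ∃ T : X ≃ₗᵢ[ℝ] X, ∀ i, ‖y k i - T (y l i)‖ < (1/2 : ℝ)^m := by
  obtain ⟨S, hSfin, -, hSnet⟩ := hcat d ((1/2)^m / 2) (by positivity)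
  choose sel hselS Tf hTf using fun k => hSnet (y k) (hy k)
  have pig : ∃ x₀ ∈ S, {k ∈ A | sel k = x₀}.Infinite := by
    by_contra hnone
    push_neg at hnone
    have hsubU : A ⊆ ⋃ x ∈ S, {k ∈ A | sel k = x} :=
      fun k hk => Set.mem_biUnion (hselS k) ⟨hk, rfl⟩
    exact hA ((hSfin.biUnion fun x hx => hnone x hx).subset hsubU)
  obtain ⟨x₀, hx₀S, hBinf⟩ := pig
  refine ⟨{k ∈ A | sel k = x₀}, fun k hk => hk.1, hBinf, fun k hk l hl => ?_⟩
  refine ⟨(Tf l).symm.trans (Tf k), fun i => ?_⟩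
  have h1 := hTf k i
  have h2 := hTf l i
  rw [hk.2] at h1
  rw [hl.2] at h2
  have h3 : dist (Tf k (x₀ i)) ((Tf k) ((Tf l).symm (y l i))) = dist (Tf l (x₀ i)) (y l i) := by
    rw [(Tf k).dist_map]
    rw [show x₀ i = (Tf l).symm (Tf l (x₀ i)) by simp]
    rw [(Tf l).symm.dist_map]
    simp
  simp only [LinearIsometryEquiv.trans_apply]
  rw [← dist_eq_norm]
  calc dist (y k i) ((Tf k) ((Tf l).symm (y l i)))
      ≤ dist (y k i) (Tf k (x₀ i)) + dist (Tf k (x₀ i)) ((Tf k) ((Tf l).symm (y l i))) :=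
        dist_triangle _ _ _
    _ = dist (y k i) (Tf k (x₀ i)) + dist (Tf l (x₀ i)) (y l i) := by rw [h3]
    _ < (1/2)^m / 2 + (1/2)^m / 2 := by
        rw [dist_eq_norm, dist_comm, dist_eq_norm]
        exact add_lt_add h1 h2
    _ = (1/2)^m := by ring

set_option maxHeartbeats 1000000 in
set_option synthInstance.maxHeartbeats 400000 in
/-- In an ω-categorical space, almost isometric embeddings of a fixed
finite-dimensional subspace are uniformly close to isometric embeddings. -/
theorem perturbation_isometry (X : Type*) [NormedAddCommGroup X]
    [NormedSpace ℝ X] [CompleteSpace X] [TopologicalSpace.SeparableSpace X]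
    (hinf : ¬ FiniteDimensional ℝ X) (hcat : OmegaCategorical X)
    (E : Submodule ℝ X) (hE : FiniteDimensional ℝ E) (ε : ℝ) (hε : 0 < ε) :
    ∃ δ : ℝ, 0 < δ ∧ ∀ f : E →L[ℝ] X, IsEmbC δ f →
      ∃ g : E →L[ℝ] X, IsIsomEmb g ∧ ‖f - g‖ ≤ ε := by
  classical
  haveI := hE
  by_contra hcon
  push_neg at hcon
  choose f hf1 hf2 using fun k : ℕ => hcon (1/((k:ℝ)+1)) (by positivity)
  set d := Module.finrank ℝ E with hd
  let b : Module.Basis (Fin d) ℝ E := Module.finBasis ℝ E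
  set Mb : ℝ := Real.exp 1 * (1 + ∑ i, ‖b i‖) with hMbdef
  have hsumnn : (0:ℝ) ≤ ∑ i, ‖b i‖ := Finset.sum_nonneg fun i _ => norm_nonneg _
  have hMpos : 0 < Mb := by
    rw [hMbdef]; positivity
  let y : ℕ → Fin d → X := fun k i => Mb⁻¹ • (f k (b i) : X)
  have hfb_le : ∀ k i, ‖f k (b i)‖ ≤ Mb := by
    intro k i
    have h1 := (hf1 k (b i)).2
    have h2 : Real.exp (1/((k:ℝ)+1)) ≤ Real.exp 1 := by
      apply Real.exp_le_exp.mpr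
      rw [div_le_one (by positivity)]
      linarith [Nat.cast_nonneg (α := ℝ) k]
    have h3 : ‖b i‖ ≤ 1 + ∑ j, ‖b j‖ := by
      have := Finset.single_le_sum (f := fun j => ‖b j‖) (fun j _ => norm_nonneg _)
        (Finset.mem_univ i)
      linarith
    calc ‖f k (b i)‖ ≤ Real.exp (1/((k:ℝ)+1)) * ‖b i‖ := h1
      _ ≤ Real.exp 1 * (1 + ∑ j, ‖b j‖) := by
          apply mul_le_mul h2 h3 (norm_nonneg _) (Real.exp_pos 1).le
      _ = Mb := hMbdef.symm
  have hy : ∀ k i, ‖y k i‖ ≤ 1 := by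
    intro k i
    have e : ‖y k i‖ = Mb⁻¹ * ‖f k (b i)‖ := by
      rw [show y k i = Mb⁻¹ • (f k (b i) : X) from rfl, norm_smul, norm_inv,
        Real.norm_eq_abs, abs_of_pos hMpos]
    rw [e, inv_mul_le_iff₀ hMpos, mul_one]
    exact hfb_le k i
  obtain ⟨A, hAinf, hAsub, hApair⟩ := nested_chain (refine_step hcat y hy)
  obtain ⟨k, hkmono, hkmem⟩ := exists_strictMono_mem hAinf
  have hUex : ∀ m, ∃ T : X ≃ₗᵢ[ℝ] X, ∀ i, ‖y (k m) i - T (y (k (m+1)) i)‖ < (1/2:ℝ)^m :=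
    fun m => hApair m _ (hkmem m) _ (hAsub m (hkmem (m+1)))
  choose U hU using hUex
  let V : ℕ → (X ≃ₗᵢ[ℝ] X) := fun m =>
    Nat.rec (LinearIsometryEquiv.refl ℝ X) (fun m p => (U m).trans p) m
  have hVsucc : ∀ m (x : X), V (m+1) x = V m (U m x) := fun m x => rfl
  let z : ℕ → Fin d → X := fun m i => V m (y (k m) i)
  have hzd : ∀ i m, dist (z m i) (z (m+1) i) ≤ 1 * (1/2:ℝ)^m := by
    intro i m
    have e : z (m+1) i = V m (U m (y (k (m+1)) i)) := rfl
    rw [e, show z m i = V m (y (k m) i) from rfl, (V m).dist_map, dist_eq_norm, one_mul]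
    exact (hU m i).le
  have hcz : ∀ i, ∃ w : X, Filter.Tendsto (fun m => z m i) Filter.atTop (nhds w) := fun i =>
    cauchySeq_tendsto_of_complete
      (cauchySeq_of_le_geometric (1/2) 1 (by norm_num) (hzd i))
  choose v hv using hcz
  let g₀ : E →ₗ[ℝ] X := b.constr ℝ (fun i => Mb • v i)
  have hfbeq : ∀ m i, (f (k m) (b i) : X) = Mb • y (k m) i := by
    intro m i
    simp [y, smul_inv_smul₀ hMpos.ne']
  have hkey : ∀ m (x : E), V m (f (k m) x) = ∑ i, b.repr x i • (Mb • z m i) := by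
    intro m x
    have e1 : (f (k m) x : X) = ∑ i, b.repr x i • (f (k m) (b i) : X) := by
      conv_lhs => rw [← b.sum_repr x]
      rw [map_sum]
      exact Finset.sum_congr rfl fun i _ => by rw [map_smul]
    rw [e1, map_sum]
    refine Finset.sum_congr rfl fun i _ => ?_
    rw [map_smul, hfbeq m i, map_smul]
  have hg0x : ∀ x : E, g₀ x = ∑ i, b.repr x i • (Mb • v i) := by
    intro x
    rw [Module.Basis.constr_apply_fintype]
    rfl
  have htend : ∀ x : E, Filter.Tendsto (fun m => V m (f (k m) x)) Filter.atTop (nhds (g₀ x)) := by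
    intro x
    rw [hg0x]
    simp only [hkey]
    exact tendsto_finset_sum _ fun i _ => (((hv i).const_smul Mb).const_smul (b.repr x i))
  have hkle : ∀ m : ℕ, (m:ℝ) ≤ (k m : ℝ) := fun m => Nat.cast_le.mpr hkmono.le_apply
  have hrecip : Filter.Tendsto (fun m : ℕ => 1/((k m:ℝ)+1)) Filter.atTop (nhds 0) := by
    apply squeeze_zero (fun m => by positivity) (fun m => ?_)
      tendsto_one_div_add_atTop_nhds_zero_nat
    exact one_div_le_one_div_of_le (by positivity) (by linarith [hkle m])
  have hexp1 : Filter.Tendsto (fun m : ℕ => Real.exp (1/((k m:ℝ)+1))) Filter.atTop (nhds 1) := by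
    have := (Real.continuous_exp.tendsto 0).comp hrecip
    simpa [Function.comp_def] using this
  have hexp2 : Filter.Tendsto (fun m : ℕ => Real.exp (-(1/((k m:ℝ)+1)))) Filter.atTop (nhds 1) := by
    have h0 : Filter.Tendsto (fun m : ℕ => -(1/((k m:ℝ)+1))) Filter.atTop (nhds 0) := by
      simpa using hrecip.neg
    have := (Real.continuous_exp.tendsto 0).comp h0
    simpa [Function.comp_def] using this
  have hiso : IsIsomEmb (LinearMap.toContinuousLinearMap g₀) := by
    intro x
    have h1 : Filter.Tendsto (fun m => ‖f (k m) x‖) Filter.atTop (nhds ‖g₀ x‖) := by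
      have := (htend x).norm
      simpa only [LinearIsometryEquiv.norm_map] using this
    have h2 : Filter.Tendsto (fun m => ‖f (k m) x‖) Filter.atTop (nhds ‖x‖) := by
      have hl : Filter.Tendsto (fun m : ℕ => Real.exp (-(1/((k m:ℝ)+1))) * ‖x‖)
          Filter.atTop (nhds ‖x‖) := by simpa using hexp2.mul_const ‖x‖
      have hu : Filter.Tendsto (fun m : ℕ => Real.exp (1/((k m:ℝ)+1)) * ‖x‖)
          Filter.atTop (nhds ‖x‖) := by simpa using hexp1.mul_const ‖x‖
      exact tendsto_of_tendsto_of_tendsto_of_le_of_le hl hu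
        (fun m => (hf1 (k m) x).1) (fun m => (hf1 (k m) x).2)
    have : ‖g₀ x‖ = ‖x‖ := tendsto_nhds_unique h1 h2
    simpa using this
  let c : Fin d → ℝ := fun i => ‖LinearMap.toContinuousLinearMap (b.coord i)‖
  have hc : ∀ i (x : E), |b.repr x i| ≤ c i * ‖x‖ := by
    intro i x
    have := (LinearMap.toContinuousLinearMap (b.coord i)).le_opNorm x
    simpa [Module.Basis.coord_apply, Real.norm_eq_abs] using this
  set C := ∑ i, c i with hCdef
  have hcnn : ∀ i, 0 ≤ c i := fun i => norm_nonneg (LinearMap.toContinuousLinearMap (b.coord i))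
  have hCnn : 0 ≤ C := Finset.sum_nonneg fun i _ => hcnn i
  set η := ε / (Mb * C + 1) with hηdef
  have hη : 0 < η := div_pos hε (by positivity)
  have hev : ∀ᶠ m in Filter.atTop, ∀ i, dist (z m i) (v i) < η := by
    rw [Filter.eventually_all]
    intro i
    have := (hv i).eventually (Metric.ball_mem_nhds (v i) hη)
    simpa [Metric.mem_ball] using this
  obtain ⟨m, hm⟩ := hev.exists
  let g' := (toCLM (V m).symm).comp (LinearMap.toContinuousLinearMap g₀)
  have hgiso' : IsIsomEmb g' := by
    intro x
    have : ‖(V m).symm (g₀ x)‖ = ‖g₀ x‖ := (V m).symm.norm_map _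
    calc ‖g' x‖ = ‖(V m).symm (g₀ x)‖ := rfl
      _ = ‖g₀ x‖ := this
      _ = ‖x‖ := by simpa using hiso x
  have hbound : ‖f (k m) - g'‖ ≤ ε := by
    refine ContinuousLinearMap.opNorm_le_bound _ hε.le fun x => ?_
    have e1 : (f (k m) - g') x = f (k m) x - (V m).symm (g₀ x) := rfl
    have e2 : ‖(f (k m) x : X) - (V m).symm (g₀ x)‖ = ‖V m (f (k m) x) - g₀ x‖ := by
      rw [← (V m).norm_map ((f (k m) x : X) - (V m).symm (g₀ x)), map_sub,
        (V m).apply_symm_apply]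
    rw [e1, e2, hkey m x, hg0x x, ← Finset.sum_sub_distrib]
    have step : ∀ i ∈ Finset.univ, ‖b.repr x i • (Mb • z m i) - b.repr x i • (Mb • v i)‖
        ≤ c i * ‖x‖ * (Mb * η) := by
      intro i _
      rw [← smul_sub, ← smul_sub, norm_smul, norm_smul, Real.norm_eq_abs,
        Real.norm_eq_abs, abs_of_pos hMpos]
      have hzv : ‖z m i - v i‖ ≤ η := by rw [← dist_eq_norm]; exact (hm i).le
      calc |b.repr x i| * (Mb * ‖z m i - v i‖)
          ≤ (c i * ‖x‖) * (Mb * η) := by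
            apply mul_le_mul (hc i x) (by gcongr) (by positivity) (by positivity)
      _ = c i * ‖x‖ * (Mb * η) := by ring
    calc ‖∑ i, (b.repr x i • (Mb • z m i) - b.repr x i • (Mb • v i))‖
        ≤ ∑ i, ‖b.repr x i • (Mb • z m i) - b.repr x i • (Mb • v i)‖ :=
          norm_sum_le _ _
      _ ≤ ∑ i, c i * ‖x‖ * (Mb * η) := Finset.sum_le_sum step
      _ = (Mb * C) * η * ‖x‖ := by rw [← Finset.sum_mul, ← Finset.sum_mul]; ring
      _ ≤ ε * ‖x‖ := by
          apply mul_le_mul_of_nonneg_right ?_ (norm_nonneg x)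
          rw [hηdef]
          rw [div_eq_mul_inv]
          calc Mb * C * (ε * (Mb * C + 1)⁻¹) = ε * ((Mb * C) * (Mb * C + 1)⁻¹) := by ring
            _ ≤ ε * 1 := by
                apply mul_le_mul_of_nonneg_left ?_ hε.le
                rw [mul_inv_le_iff₀ (by positivity)]
                linarith
            _ = ε := mul_one ε
  exact absurd hbound (not_le.mpr (hf2 (k m) g' hgiso'))
end
end
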